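/- arXiv:1710.10605 — 4 statements merged into one kernel-verified Lean document; each statement's English description precedes it below -/
import Mathlib

section
/- (Proposition 2, case D≥3, existence) Let D ≥ 3 and let R'^{ikjp} be a smooth tensor field on ℝ^D having Riemann symmetries and satisfying ∂_k∂_p R'^{ikjp} = 0 for all i,j. Then there exists a smooth tensor field ξ^{ikjpr} on ℝ^D, antisymmetric in the pair [ik] and totally antisymmetric in the last three indices [jpr] (ξ^{ikjpr}=ξ^{[ik][jpr]}), such that R'^{ikjp} = ∂_r ( (1/2)ξ^{ikjpr} + (1/2)ξ^{jpikr} − ξ^{[ikjpr]} ) (sum over r). -/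
/-- Partial derivative in the k-th Cartesian coordinate direction on ℝ^D. -/
noncomputable def pd {D : ℕ} (k : Fin D) (f : (Fin D → ℝ) → ℝ) : (Fin D → ℝ) → ℝ :=
  fun x => fderiv ℝ f x (Pi.single k 1)

/-- Total antisymmetrization ξ^{[ikjpr]} of a 5-index tensor field, with 1/5!
normalization. -/
noncomputable def alt5 {D : ℕ}
    (ξ : Fin D → Fin D → Fin D → Fin D → Fin D → (Fin D → ℝ) → ℝ)
    (i k j p r : Fin D) : (Fin D → ℝ) → ℝ :=
  fun x => (1 / 120 : ℝ) * ∑ σ : Equiv.Perm (Fin 5),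
    ((Equiv.Perm.sign σ : ℤ) : ℝ) *
      ξ (![i,k,j,p,r] (σ 0)) (![i,k,j,p,r] (σ 1)) (![i,k,j,p,r] (σ 2))
        (![i,k,j,p,r] (σ 3)) (![i,k,j,p,r] (σ 4)) x


namespace Stmt4

variable {D : ℕ}

variable {D : ℕ}

noncomputable def Sc (q : ℕ) (f : (Fin D → ℝ) → ℝ) : (Fin D → ℝ) → ℝ :=
  fun x => ∫ t in (0:ℝ)..1, t ^ q * f (t • x)

theorem smooth_pd {f : (Fin D → ℝ) → ℝ} (hf : ContDiff ℝ (⊤:ℕ∞) f) (m : Fin D) :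
    ContDiff ℝ (⊤:ℕ∞) (pd m f) := by
  have h := hf.fderiv_right (m := (⊤:ℕ∞)) (by simp)
  exact h.clm_apply contDiff_const

theorem cont_integrand {f : (Fin D → ℝ) → ℝ} (hf : Continuous f) (q : ℕ) (x : Fin D → ℝ) :
    Continuous fun t : ℝ => t ^ q * f (t • x) :=
  (continuous_pow q).mul (hf.comp (continuous_id.smul continuous_const))

theorem Sc_hasFDerivAt {f : (Fin D → ℝ) → ℝ} (hf : ContDiff ℝ (⊤:ℕ∞) f) (q : ℕ)
    (x₀ : Fin D → ℝ) :
    HasFDerivAt (Sc q f)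
      (∫ t in (0:ℝ)..1, (t ^ (q+1)) • fderiv ℝ f (t • x₀)) x₀ := by
  have hder : Continuous (fderiv ℝ f) := (hf.fderiv_right (m := (⊤:ℕ∞)) (by simp)).continuous
  -- compact set
  obtain ⟨C, hC⟩ : ∃ C, ∀ y ∈ (fun p : ℝ × (Fin D → ℝ) => p.1 • p.2) ''
      (Set.Icc (0:ℝ) 1 ×ˢ Metric.closedBall x₀ 1), ‖fderiv ℝ f y‖ ≤ C := by
    apply IsCompact.exists_bound_of_continuousOn
    · exact ((isCompact_Icc).prod (isCompact_closedBall x₀ 1)).image (continuous_smul)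
    · exact hder.continuousOn
  have key := intervalIntegral.hasFDerivAt_integral_of_dominated_of_fderiv_le
      (𝕜 := ℝ) (μ := MeasureTheory.volume) (a := (0:ℝ)) (b := 1)
      (F := fun (x : Fin D → ℝ) (t : ℝ) => t ^ q * f (t • x))
      (F' := fun (x : Fin D → ℝ) (t : ℝ) => (t ^ (q+1)) • fderiv ℝ f (t • x))
      (x₀ := x₀) (bound := fun _ => |C|) (s := Metric.ball x₀ 1) (Metric.ball_mem_nhds x₀ one_pos)
      ?_ ?_ ?_ ?_ ?_ ?_
  · exact key
  · filter_upwards with x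
    exact (cont_integrand hf.continuous q x).aestronglyMeasurable
  · exact (cont_integrand hf.continuous q x₀).intervalIntegrable _ _
  · apply Continuous.aestronglyMeasurable
    exact ((continuous_pow (q+1)).smul (hder.comp (continuous_id.smul continuous_const)))
  · filter_upwards with t ht x hx
    have ht' : t ∈ Set.Ioc (0:ℝ) 1 := by
      simpa [Set.uIoc_of_le (by norm_num : (0:ℝ) ≤ 1)] using ht
    have hmem : t • x ∈ (fun p : ℝ × (Fin D → ℝ) => p.1 • p.2) ''
        (Set.Icc (0:ℝ) 1 ×ˢ Metric.closedBall x₀ 1) := by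
      exact ⟨(t, x), ⟨⟨le_of_lt ht'.1, ht'.2⟩, Metric.ball_subset_closedBall hx⟩, rfl⟩
    have h1 : ‖(t ^ (q+1)) • fderiv ℝ f (t • x)‖ = |t| ^ (q+1) * ‖fderiv ℝ f (t • x)‖ := by
      rw [norm_smul]; simp [abs_pow]
    rw [h1]
    have htabs : |t| ≤ 1 := by
      rw [abs_of_pos ht'.1]; exact ht'.2
    calc |t| ^ (q+1) * ‖fderiv ℝ f (t • x)‖ ≤ 1 * ‖fderiv ℝ f (t • x)‖ := by
          apply mul_le_mul_of_nonneg_right _ (norm_nonneg _)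
          exact pow_le_one₀ (abs_nonneg t) htabs
      _ ≤ |C| := by rw [one_mul]; exact le_trans (hC _ hmem) (le_abs_self C)
  · exact intervalIntegrable_const
  · filter_upwards with t _ x _
    have h2 : HasFDerivAt (fun y : Fin D → ℝ => t • y)
        (t • ContinuousLinearMap.id ℝ (Fin D → ℝ)) x :=
      ((ContinuousLinearMap.id ℝ (Fin D → ℝ)).hasFDerivAt).const_smul t
    have h3 : HasFDerivAt (fun y : Fin D → ℝ => f (t • y))
        ((fderiv ℝ f (t • x)).comp (t • ContinuousLinearMap.id ℝ (Fin D → ℝ))) x :=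
      HasFDerivAt.comp x ((hf.differentiable (by simp) (t • x)).hasFDerivAt) h2
    have h4 := h3.const_mul (t ^ q)
    refine h4.congr_fderiv ?_
    ext v
    simp [ContinuousLinearMap.smul_apply, ContinuousLinearMap.comp_apply, map_smul, pow_succ]
    ring



theorem clm_integrable {f : (Fin D → ℝ) → ℝ} (hf : ContDiff ℝ (⊤:ℕ∞) f) (q : ℕ)
    (x : Fin D → ℝ) :
    IntervalIntegrable (fun t : ℝ => (t ^ (q+1)) • fderiv ℝ f (t • x))
      MeasureTheory.volume 0 1 := by
  have hder : Continuous (fderiv ℝ f) := (hf.fderiv_right (m := (⊤:ℕ∞)) (by simp)).continuous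
  exact (((continuous_pow (q+1)).smul
    (hder.comp (continuous_id.smul continuous_const)))).intervalIntegrable _ _

theorem fderiv_apply_eq_sum {f : (Fin D → ℝ) → ℝ} (y v : Fin D → ℝ) :
    fderiv ℝ f y v = ∑ m, v m * pd m f y := by
  conv_lhs => rw [pi_eq_sum_univ v]
  rw [map_sum]
  refine Finset.sum_congr rfl fun m _ => ?_
  have hsingle : (fun j => if m = j then (1:ℝ) else 0) = Pi.single m 1 := by
    funext j; rw [Pi.single_apply]; simp [eq_comm]
  rw [map_smul, hsingle, smul_eq_mul]; rfl

theorem pd_Sc {f : (Fin D → ℝ) → ℝ} (hf : ContDiff ℝ (⊤:ℕ∞) f) (q : ℕ) (m : Fin D)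
    (x : Fin D → ℝ) : pd m (Sc q f) x = Sc (q+1) (pd m f) x := by
  have h := (Sc_hasFDerivAt hf q x).fderiv
  rw [pd, h, ContinuousLinearMap.intervalIntegral_apply (clm_integrable hf q x)]
  apply intervalIntegral.integral_congr
  intro t _
  simp [pd, smul_eq_mul]

theorem Sc_fderiv_eq {f : (Fin D → ℝ) → ℝ} (hf : ContDiff ℝ (⊤:ℕ∞) f) (q : ℕ) :
    fderiv ℝ (Sc q f) = fun x =>
      ∑ m, Sc (q+1) (pd m f) x • (ContinuousLinearMap.proj (R := ℝ) (φ := fun _ : Fin D => ℝ) m) := by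
  funext x
  rw [(Sc_hasFDerivAt hf q x).fderiv]
  ext v
  rw [ContinuousLinearMap.intervalIntegral_apply (clm_integrable hf q x)]
  have : ∀ t : ℝ, ((t ^ (q+1)) • fderiv ℝ f (t • x)) v
      = ∑ m, v m * (t ^ (q+1) * pd m f (t • x)) := by
    intro t
    rw [ContinuousLinearMap.smul_apply, fderiv_apply_eq_sum, smul_eq_mul, Finset.mul_sum]
    exact Finset.sum_congr rfl fun m _ => by ring
  rw [intervalIntegral.integral_congr (fun t _ => this t),
    intervalIntegral.integral_finset_sum]
  · simp only [ContinuousLinearMap.sum_apply, ContinuousLinearMap.smul_apply,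
      ContinuousLinearMap.proj_apply]
    refine Finset.sum_congr rfl fun m _ => ?_
    rw [intervalIntegral.integral_const_mul]
    simp [Sc, smul_eq_mul, mul_comm]
  · intro m _
    exact (continuous_const.mul (cont_integrand (smooth_pd hf m).continuous (q+1) x)).intervalIntegrable _ _

theorem Sc_contDiff {f : (Fin D → ℝ) → ℝ} (hf : ContDiff ℝ (⊤:ℕ∞) f) (q : ℕ) :
    ContDiff ℝ (⊤:ℕ∞) (Sc q f) := by
  suffices h : ∀ n : ℕ, ∀ f : (Fin D → ℝ) → ℝ, ContDiff ℝ (⊤:ℕ∞) f → ∀ q : ℕ,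
      ContDiff ℝ (n : WithTop ℕ∞) (Sc q f) by
    rw [contDiff_infty]
    intro n
    exact h n f hf q
  intro n
  induction n with
  | zero =>
    intro f hf q
    have h0 : ((0:ℕ) : WithTop ℕ∞) = 0 := by norm_cast
    rw [h0, contDiff_zero]
    exact continuous_iff_continuousAt.2 fun x => ((Sc_hasFDerivAt hf q x).differentiableAt).continuousAt
  | succ n ih =>
    intro f hf q
    have h1 : (((n+1:ℕ)) : WithTop ℕ∞) = (n: WithTop ℕ∞) + 1 := by push_cast; rfl
    rw [h1, contDiff_succ_iff_fderiv]
    refine ⟨fun x => (Sc_hasFDerivAt hf q x).differentiableAt, by simp, ?_⟩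
    rw [Sc_fderiv_eq hf q]
    exact ContDiff.sum fun m _ => (ih (pd m f) (smooth_pd hf m) (q+1)).smul contDiff_const



/-- Fundamental homotopy identity. -/
theorem Sc_ftc {f : (Fin D → ℝ) → ℝ} (hf : ContDiff ℝ (⊤:ℕ∞) f) (q : ℕ) (x : Fin D → ℝ) :
    ((q:ℝ)+1) * Sc q f x + ∑ m, x m * Sc (q+1) (pd m f) x = f x := by
  have hderiv : ∀ t ∈ Set.uIcc (0:ℝ) 1,
      HasDerivAt (fun s : ℝ => s ^ (q+1) * f (s • x))
        (((q:ℝ)+1) * t ^ q * f (t • x) + t ^ (q+1) * (fderiv ℝ f (t • x) x)) t := by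
    intro t _
    have h1 : HasDerivAt (fun s : ℝ => s ^ (q+1)) (((q:ℝ)+1) * t ^ q) t := by
      simpa using hasDerivAt_pow (q+1) t
    have h2 : HasDerivAt (fun s : ℝ => s • x) x t := by
      simpa using (hasDerivAt_id t).smul_const x
    have h3 : HasDerivAt (fun s : ℝ => f (s • x)) (fderiv ℝ f (t • x) x) t :=
      (((hf.differentiable (by simp) (t • x)).hasFDerivAt).comp_hasDerivAt t h2)
    simpa using h1.fun_mul h3
  have hcont : Continuous fun t : ℝ =>
      ((q:ℝ)+1) * t ^ q * f (t • x) + t ^ (q+1) * (fderiv ℝ f (t • x) x) := by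
    have hder : Continuous (fderiv ℝ f) := (hf.fderiv_right (m := (⊤:ℕ∞)) (by simp)).continuous
    apply Continuous.add
    · exact (continuous_const.mul (continuous_pow q)).mul
        (hf.continuous.comp (continuous_id.smul continuous_const))
    · exact (continuous_pow (q+1)).mul
        (((hder.comp (continuous_id.smul continuous_const)).clm_apply continuous_const))
  have hftc := intervalIntegral.integral_eq_sub_of_hasDerivAt hderiv
      (hcont.intervalIntegrable _ _)
  simp only [one_pow, one_smul, zero_pow (Nat.succ_ne_zero q), zero_mul, sub_zero] at hftc
  have hA : Continuous fun t : ℝ => ((q:ℝ)+1) * t ^ q * f (t • x) := by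
    exact (continuous_const.mul (continuous_pow q)).mul
      (hf.continuous.comp (continuous_id.smul continuous_const))
  have hB : Continuous fun t : ℝ => t ^ (q+1) * (fderiv ℝ f (t • x) x) := by
    exact (continuous_pow (q+1)).mul
      (((hf.fderiv_right (m := (⊤:ℕ∞)) (by simp)).continuous.comp
        (continuous_id.smul continuous_const)).clm_apply continuous_const)
  rw [intervalIntegral.integral_add (hA.intervalIntegrable _ _) (hB.intervalIntegrable _ _)]
    at hftc
  have e1 : ∫ t in (0:ℝ)..1, ((q:ℝ)+1) * t ^ q * f (t • x) = ((q:ℝ)+1) * Sc q f x := by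
    rw [Sc, ← intervalIntegral.integral_const_mul]
    apply intervalIntegral.integral_congr; intro t _; ring
  have e2 : ∫ t in (0:ℝ)..1, t ^ (q+1) * (fderiv ℝ f (t • x) x)
      = ∑ m, x m * Sc (q+1) (pd m f) x := by
    have : ∀ t : ℝ, t ^ (q+1) * (fderiv ℝ f (t • x) x)
        = ∑ m, x m * (t ^ (q+1) * pd m f (t • x)) := by
      intro t
      rw [fderiv_apply_eq_sum, Finset.mul_sum]
      exact Finset.sum_congr rfl fun m _ => by ring
    rw [intervalIntegral.integral_congr (fun t _ => this t),
      intervalIntegral.integral_finset_sum]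
    · exact Finset.sum_congr rfl fun m _ => by
        rw [intervalIntegral.integral_const_mul]; rfl
    · intro m _
      exact (continuous_const.mul
        (cont_integrand (smooth_pd hf m).continuous (q+1) x)).intervalIntegrable _ _
  rw [e1, e2] at hftc
  rw [hftc, one_mul]

theorem Sc_congr {f g : (Fin D → ℝ) → ℝ} (h : ∀ y, f y = g y) (q : ℕ) (x : Fin D → ℝ) :
    Sc q f x = Sc q g x := by
  have : f = g := funext h
  rw [this]

theorem Sc_neg {f : (Fin D → ℝ) → ℝ} (q : ℕ) (x : Fin D → ℝ) :
    Sc q (fun y => -f y) x = -Sc q f x := by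
  rw [Sc, Sc, ← intervalIntegral.integral_neg]
  apply intervalIntegral.integral_congr; intro t _; ring

theorem Sc_negcongr {f g : (Fin D → ℝ) → ℝ} (h : ∀ y, f y = -g y) (q : ℕ) (x : Fin D → ℝ) :
    Sc q f x = -Sc q g x := by
  rw [Sc_congr h q x, Sc_neg]

theorem Sc_add {f g : (Fin D → ℝ) → ℝ} (hf : Continuous f) (hg : Continuous g) (q : ℕ)
    (x : Fin D → ℝ) : Sc q (fun y => f y + g y) x = Sc q f x + Sc q g x := by
  rw [Sc, Sc, Sc, ← intervalIntegral.integral_add (cont_integrand hf q x |>.intervalIntegrable _ _)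
    (cont_integrand hg q x |>.intervalIntegrable _ _)]
  apply intervalIntegral.integral_congr; intro t _; ring

theorem Sc_zero (q : ℕ) (x : Fin D → ℝ) : Sc q (fun _ => (0:ℝ)) x = 0 := by
  simp [Sc]

theorem Sc_zerocongr {f : (Fin D → ℝ) → ℝ} (h : ∀ y, f y = 0) (q : ℕ) (x : Fin D → ℝ) :
    Sc q f x = 0 := by
  rw [Sc_congr h q x, Sc_zero]

theorem Sc_sum {ι : Type*} (s : Finset ι) (F : ι → (Fin D → ℝ) → ℝ)
    (h : ∀ i, Continuous (F i)) (q : ℕ) (x : Fin D → ℝ) :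
    Sc q (fun y => ∑ i ∈ s, F i y) x = ∑ i ∈ s, Sc q (F i) x := by
  simp only [Sc]
  rw [← intervalIntegral.integral_finset_sum
    (fun i _ => (cont_integrand (h i) q x).intervalIntegrable _ _)]
  apply intervalIntegral.integral_congr; intro t _
  show t ^ q * ∑ i ∈ s, F i (t • x) = ∑ i ∈ s, t ^ q * F i (t • x)
  rw [Finset.mul_sum]

theorem Sc_coord_pull {f : (Fin D → ℝ) → ℝ} (a : Fin D) (q : ℕ) (x : Fin D → ℝ) :
    Sc q (fun y => y a * f y) x = x a * Sc (q+1) f x := by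
  rw [Sc, Sc, ← intervalIntegral.integral_const_mul]
  apply intervalIntegral.integral_congr; intro t _
  show t ^ q * ((t • x) a * f (t • x)) = x a * (t ^ (q+1) * f (t • x))
  have h1 : (t • x) a = t * x a := rfl
  rw [h1, pow_succ]; ring

-- pd algebra
theorem pd_add {f g : (Fin D → ℝ) → ℝ} {x : Fin D → ℝ} (hf : DifferentiableAt ℝ f x)
    (hg : DifferentiableAt ℝ g x) (m : Fin D) :
    pd m (fun y => f y + g y) x = pd m f x + pd m g x := by
  simp [pd, fderiv_fun_add hf hg]

theorem pd_neg {f : (Fin D → ℝ) → ℝ} {x : Fin D → ℝ} (m : Fin D) :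
    pd m (fun y => -f y) x = -pd m f x := by
  simp [pd, fderiv_neg]

theorem pd_const_mul {f : (Fin D → ℝ) → ℝ} {x : Fin D → ℝ} (hf : DifferentiableAt ℝ f x)
    (c : ℝ) (m : Fin D) : pd m (fun y => c * f y) x = c * pd m f x := by
  simp [pd, fderiv_const_mul hf c]

theorem pd_sum {ι : Type*} (s : Finset ι) (F : ι → (Fin D → ℝ) → ℝ) {x : Fin D → ℝ}
    (h : ∀ i ∈ s, DifferentiableAt ℝ (F i) x) (m : Fin D) :
    pd m (fun y => ∑ i ∈ s, F i y) x = ∑ i ∈ s, pd m (F i) x := by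
  simp [pd, fderiv_fun_sum h]

theorem pd_congr {f g : (Fin D → ℝ) → ℝ} (h : ∀ y, f y = g y) (m : Fin D) (x : Fin D → ℝ) :
    pd m f x = pd m g x := by
  have : f = g := funext h
  rw [this]

theorem pd_coord_mul {f : (Fin D → ℝ) → ℝ} {x : Fin D → ℝ} (hf : DifferentiableAt ℝ f x)
    (a m : Fin D) :
    pd m (fun y => y a * f y) x = x a * pd m f x + (if a = m then f x else 0) := by
  have h1 : HasFDerivAt (fun y : Fin D → ℝ => y a)
      (ContinuousLinearMap.proj (R := ℝ) (φ := fun _ : Fin D => ℝ) a) x :=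
    (ContinuousLinearMap.proj (R := ℝ) (φ := fun _ : Fin D => ℝ) a).hasFDerivAt
  have := fderiv_fun_mul (𝕜 := ℝ) h1.differentiableAt hf
  rw [pd, this]
  simp only [ContinuousLinearMap.add_apply, ContinuousLinearMap.smul_apply, smul_eq_mul]
  rw [h1.fderiv]
  simp only [ContinuousLinearMap.proj_apply]
  rw [Pi.single_apply]
  rw [pd]
  by_cases h : a = m
  · subst h; simp
  · simp [h, Ne.symm h]



theorem comp_mul (v : Fin 5 → Fin D) (σ π : Equiv.Perm (Fin 5)) :
    v ∘ ⇑(σ * π) = (v ∘ ⇑σ) ∘ ⇑π := by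
  funext n; simp [Equiv.Perm.mul_apply]

/-- If `g` is symmetric under swapping two slots, the signed sum over permutations vanishes. -/
theorem alt_pair (g : (Fin 5 → Fin D) → ℝ) (s t : Fin 5) (hst : s ≠ t)
    (hg : ∀ w : Fin 5 → Fin D, g (w ∘ ⇑(Equiv.swap s t)) = g w) (v : Fin 5 → Fin D) :
    ∑ σ : Equiv.Perm (Fin 5), ((Equiv.Perm.sign σ : ℤ) : ℝ) * g (v ∘ ⇑σ) = 0 := by
  have key := Equiv.sum_comp (Equiv.mulRight (Equiv.swap s t))
      (fun σ : Equiv.Perm (Fin 5) => ((Equiv.Perm.sign σ : ℤ) : ℝ) * g (v ∘ ⇑σ))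
  have h2 : ∀ σ : Equiv.Perm (Fin 5),
      ((Equiv.Perm.sign (σ * Equiv.swap s t) : ℤ) : ℝ) * g (v ∘ ⇑(σ * Equiv.swap s t))
      = -(((Equiv.Perm.sign σ : ℤ) : ℝ) * g (v ∘ ⇑σ)) := by
    intro σ
    rw [comp_mul, hg (v ∘ ⇑σ), Equiv.Perm.sign_mul, Equiv.Perm.sign_swap hst]
    push_cast
    ring
  simp only [Equiv.coe_mulRight] at key
  rw [Finset.sum_congr rfl (fun σ _ => h2 σ), Finset.sum_neg_distrib] at key
  linarith

/-- If `g` satisfies a 3-term cyclic identity along an even permutation `ρ`,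
the signed sum over permutations vanishes. -/
theorem alt_cyc (g : (Fin 5 → Fin D) → ℝ) (ρ : Equiv.Perm (Fin 5))
    (hρ : Equiv.Perm.sign ρ = 1)
    (hg : ∀ w : Fin 5 → Fin D, g w + g (w ∘ ⇑ρ) + g ((w ∘ ⇑ρ) ∘ ⇑ρ) = 0) (v : Fin 5 → Fin D) :
    ∑ σ : Equiv.Perm (Fin 5), ((Equiv.Perm.sign σ : ℤ) : ℝ) * g (v ∘ ⇑σ) = 0 := by
  have key1 := Equiv.sum_comp (Equiv.mulRight ρ)
      (fun σ : Equiv.Perm (Fin 5) => ((Equiv.Perm.sign σ : ℤ) : ℝ) * g (v ∘ ⇑σ))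
  have key2 := Equiv.sum_comp (Equiv.mulRight (ρ * ρ))
      (fun σ : Equiv.Perm (Fin 5) => ((Equiv.Perm.sign σ : ℤ) : ℝ) * g (v ∘ ⇑σ))
  simp only [Equiv.coe_mulRight] at key1 key2
  have h1 : ∀ σ : Equiv.Perm (Fin 5),
      ((Equiv.Perm.sign (σ * ρ) : ℤ) : ℝ) * g (v ∘ ⇑(σ * ρ))
      = ((Equiv.Perm.sign σ : ℤ) : ℝ) * g ((v ∘ ⇑σ) ∘ ⇑ρ) := by
    intro σ
    rw [comp_mul, Equiv.Perm.sign_mul, hρ]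
    push_cast
    ring
  have h2 : ∀ σ : Equiv.Perm (Fin 5),
      ((Equiv.Perm.sign (σ * (ρ * ρ)) : ℤ) : ℝ) * g (v ∘ ⇑(σ * (ρ * ρ)))
      = ((Equiv.Perm.sign σ : ℤ) : ℝ) * g (((v ∘ ⇑σ) ∘ ⇑ρ) ∘ ⇑ρ) := by
    intro σ
    have : v ∘ ⇑(σ * (ρ * ρ)) = ((v ∘ ⇑σ) ∘ ⇑ρ) ∘ ⇑ρ := by
      funext n; simp [Equiv.Perm.mul_apply]
    rw [this, Equiv.Perm.sign_mul, Equiv.Perm.sign_mul, hρ]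
    push_cast
    ring
  rw [Finset.sum_congr rfl (fun σ _ => h1 σ)] at key1
  rw [Finset.sum_congr rfl (fun σ _ => h2 σ)] at key2
  have hsum : (∑ σ : Equiv.Perm (Fin 5), ((Equiv.Perm.sign σ : ℤ) : ℝ) * g (v ∘ ⇑σ))
      + (∑ σ : Equiv.Perm (Fin 5), ((Equiv.Perm.sign σ : ℤ) : ℝ) * g ((v ∘ ⇑σ) ∘ ⇑ρ))
      + (∑ σ : Equiv.Perm (Fin 5), ((Equiv.Perm.sign σ : ℤ) : ℝ) * g (((v ∘ ⇑σ) ∘ ⇑ρ) ∘ ⇑ρ))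
      = 0 := by
    rw [← Finset.sum_add_distrib, ← Finset.sum_add_distrib]
    apply Finset.sum_eq_zero
    intro σ _
    have heq : ((Equiv.Perm.sign σ : ℤ) : ℝ) * g (v ∘ ⇑σ)
        + ((Equiv.Perm.sign σ : ℤ) : ℝ) * g ((v ∘ ⇑σ) ∘ ⇑ρ)
        + ((Equiv.Perm.sign σ : ℤ) : ℝ) * g (((v ∘ ⇑σ) ∘ ⇑ρ) ∘ ⇑ρ)
        = ((Equiv.Perm.sign σ : ℤ) : ℝ)
          * (g (v ∘ ⇑σ) + g ((v ∘ ⇑σ) ∘ ⇑ρ) + g (((v ∘ ⇑σ) ∘ ⇑ρ) ∘ ⇑ρ)) := by ring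
    rw [heq, hg (v ∘ ⇑σ), mul_zero]
  linarith



variable {D : ℕ} (R' : Fin D → Fin D → Fin D → Fin D → (Fin D → ℝ) → ℝ)

noncomputable def Gf (a b c : Fin D) : (Fin D → ℝ) → ℝ :=
  fun x => ∑ m, pd m (R' a b c m) x

noncomputable def Wf (q : ℕ) (e i k j : Fin D) : (Fin D → ℝ) → ℝ :=
  fun x => x e * Sc q (Gf R' i k j) x + x i * Sc q (Gf R' k e j) x + x k * Sc q (Gf R' e i j) x

noncomputable def tauF (q : ℕ) (i k j p r : Fin D) : (Fin D → ℝ) → ℝ :=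
  fun x => x j * Sc q (R' i k p r) x + x p * Sc q (R' i k r j) x + x r * Sc q (R' i k j p) x

noncomputable def muF (q : ℕ) (i k j p r : Fin D) : (Fin D → ℝ) → ℝ :=
  fun x => -(x i * Sc q (Wf R' q j p r k) x) + x k * Sc q (Wf R' q j p r i) x

noncomputable def xiF (q : ℕ) (i k j p r : Fin D) : (Fin D → ℝ) → ℝ :=
  fun x => tauF R' q i k j p r x + muF R' q i k j p r x

section Smooth

variable (hsmooth : ∀ i k j p, ContDiff ℝ (⊤:ℕ∞) (R' i k j p))

theorem coord_smooth (a : Fin D) : ContDiff ℝ (⊤:ℕ∞) (fun y : Fin D → ℝ => y a) :=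
  (ContinuousLinearMap.proj (R := ℝ) (φ := fun _ : Fin D => ℝ) a).contDiff

include hsmooth

theorem Gf_smooth (a b c : Fin D) : ContDiff ℝ (⊤:ℕ∞) (Gf R' a b c) :=
  ContDiff.sum fun m _ => smooth_pd (hsmooth a b c m) m

theorem Wf_smooth (q : ℕ) (e i k j : Fin D) : ContDiff ℝ (⊤:ℕ∞) (Wf R' q e i k j) :=
  (((coord_smooth e).mul (Sc_contDiff (Gf_smooth R' hsmooth i k j) q)).add
    ((coord_smooth i).mul (Sc_contDiff (Gf_smooth R' hsmooth k e j) q))).add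
    ((coord_smooth k).mul (Sc_contDiff (Gf_smooth R' hsmooth e i j) q))

theorem tauF_smooth (q : ℕ) (i k j p r : Fin D) : ContDiff ℝ (⊤:ℕ∞) (tauF R' q i k j p r) :=
  (((coord_smooth j).mul (Sc_contDiff (hsmooth i k p r) q)).add
    ((coord_smooth p).mul (Sc_contDiff (hsmooth i k r j) q))).add
    ((coord_smooth r).mul (Sc_contDiff (hsmooth i k j p) q))

theorem muF_smooth (q : ℕ) (i k j p r : Fin D) : ContDiff ℝ (⊤:ℕ∞) (muF R' q i k j p r) :=
  (((coord_smooth i).mul (Sc_contDiff (Wf_smooth R' hsmooth q j p r k) q)).neg).add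
    ((coord_smooth k).mul (Sc_contDiff (Wf_smooth R' hsmooth q j p r i) q))

theorem xiF_smooth (q : ℕ) (i k j p r : Fin D) : ContDiff ℝ (⊤:ℕ∞) (xiF R' q i k j p r) :=
  (tauF_smooth R' hsmooth q i k j p r).add (muF_smooth R' hsmooth q i k j p r)

end Smooth

theorem dAt {f : (Fin D → ℝ) → ℝ} (hf : ContDiff ℝ (⊤:ℕ∞) f) (x : Fin D → ℝ) :
    DifferentiableAt ℝ f x :=
  (hf.differentiable (by simp)).differentiableAt

section Identities

variable (hsmooth : ∀ i k j p, ContDiff ℝ (⊤:ℕ∞) (R' i k j p))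
  (hanti1 : ∀ i k j p x, R' i k j p x = - R' k i j p x)
  (hanti2 : ∀ i k j p x, R' i k j p x = - R' i k p j x)
  (hpair : ∀ i k j p x, R' i k j p x = R' j p i k x)
  (hbianchi : ∀ i k j p x,
    (1/6 : ℝ) * (R' i k j p x - R' i j k p x - R' i k p j x
      - R' i p j k x + R' i j p k x + R' i p k j x) = 0)
  (hdiv : ∀ i j x, ∑ k, ∑ p, pd k (pd p (R' i k j p)) x = 0)

include hanti2 hbianchi in
theorem Rcyc (a b c d : Fin D) (y : Fin D → ℝ) :
    R' a b c d y + R' a c d b y + R' a d b c y = 0 := by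
  have h1 := hbianchi a b c d y
  have h2 := hanti2 a b c d y
  have h3 := hanti2 a c b d y
  have h4 := hanti2 a d c b y
  linarith

include hanti1 hsmooth in
theorem Ganti (a b c : Fin D) (y : Fin D → ℝ) : Gf R' a b c y = -Gf R' b a c y := by
  rw [Gf, Gf, ← Finset.sum_neg_distrib]
  refine Finset.sum_congr rfl fun m _ => ?_
  rw [← pd_neg (f := R' b a c m) m]
  exact pd_congr (fun z => hanti1 a b c m z) m y

include hsmooth hanti2 hpair hbianchi in
theorem Gmaster (a b c : Fin D) (y : Fin D → ℝ) :
    Gf R' a b c y = Gf R' a c b y - Gf R' b c a y := by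
  rw [Gf, Gf, Gf, ← Finset.sum_sub_distrib]
  refine Finset.sum_congr rfl fun m _ => ?_
  have hpt : ∀ z, R' a b c m z = R' a c b m z + -(R' b c a m z) := by
    intro z
    have h1 := Rcyc R' hanti2 hbianchi a b c m z
    have h2 := hanti2 a c b m z
    have h3 := hpair a m b c z
    linarith
  rw [pd_congr hpt m y,
    pd_add (dAt (hsmooth a c b m) y) ((dAt (hsmooth b c a m) y).fun_neg) m,
    pd_neg m]
  ring

include hsmooth hdiv in
theorem Gdiv2 (a c : Fin D) (y : Fin D → ℝ) : ∑ e, pd e (Gf R' a e c) y = 0 := by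
  have key : ∀ e : Fin D, pd e (Gf R' a e c) y = ∑ n, pd e (pd n (R' a e c n)) y := by
    intro e
    have hu : Gf R' a e c = fun z => ∑ n, pd n (R' a e c n) z := rfl
    rw [hu]
    exact pd_sum Finset.univ _ (fun n _ => dAt (smooth_pd (hsmooth a e c n) n) y) e
  rw [Finset.sum_congr rfl fun e _ => key e]
  exact hdiv a c y

include hsmooth hanti1 hdiv in
theorem Gdiv1 (a c : Fin D) (y : Fin D → ℝ) : ∑ e, pd e (Gf R' e a c) y = 0 := by
  have key : ∀ e : Fin D, pd e (Gf R' e a c) y = -∑ n, pd e (pd n (R' a e c n)) y := by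
    intro e
    have hu : Gf R' e a c = fun z => ∑ n, pd n (R' e a c n) z := rfl
    rw [hu, ← Finset.sum_neg_distrib]
    have h1 : ∀ n, ∀ z, pd n (R' e a c n) z = -(pd n (R' a e c n) z) := by
      intro n z
      rw [← pd_neg (f := R' a e c n) n]
      exact pd_congr (fun u => hanti1 e a c n u) n z
    rw [pd_sum Finset.univ _ (fun n _ => dAt (smooth_pd (hsmooth e a c n) n) y) e]
    refine Finset.sum_congr rfl fun n _ => ?_
    rw [pd_congr (h1 n) e y, pd_neg e]
  rw [Finset.sum_congr rfl fun e _ => key e, Finset.sum_neg_distrib, hdiv a c y, neg_zero]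

end Identities

section Divergences

variable (hsmooth : ∀ i k j p, ContDiff ℝ (⊤:ℕ∞) (R' i k j p))
  (hanti1 : ∀ i k j p x, R' i k j p x = - R' k i j p x)
  (hanti2 : ∀ i k j p x, R' i k j p x = - R' i k p j x)
  (hpair : ∀ i k j p x, R' i k j p x = R' j p i k x)
  (hbianchi : ∀ i k j p x,
    (1/6 : ℝ) * (R' i k j p x - R' i j k p x - R' i k p j x
      - R' i p j k x + R' i j p k x + R' i p k j x) = 0)
  (hdiv : ∀ i j x, ∑ k, ∑ p, pd k (pd p (R' i k j p)) x = 0)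

include hsmooth hanti1 hdiv in
theorem Wdiv (q : ℕ) (hq : D = q + 3) (i k j : Fin D) (x : Fin D → ℝ) :
    ∑ e, pd e (Wf R' q e i k j) x = Gf R' i k j x := by
  have hGs : ∀ a b c : Fin D, ContDiff ℝ (⊤:ℕ∞) (Gf R' a b c) := fun a b c =>
    Gf_smooth R' hsmooth a b c
  have step1 : ∀ e : Fin D, pd e (Wf R' q e i k j) x =
      ((x e * Sc (q+1) (pd e (Gf R' i k j)) x + Sc q (Gf R' i k j) x)
      + (x i * Sc (q+1) (pd e (Gf R' k e j)) x + (if i = e then Sc q (Gf R' k e j) x else 0)))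
      + (x k * Sc (q+1) (pd e (Gf R' e i j)) x + (if k = e then Sc q (Gf R' e i j) x else 0)) := by
    intro e
    have hu : Wf R' q e i k j = fun y =>
        (y e * Sc q (Gf R' i k j) y + y i * Sc q (Gf R' k e j) y)
        + y k * Sc q (Gf R' e i j) y := rfl
    rw [hu]
    have d1 : DifferentiableAt ℝ (fun y : Fin D → ℝ => y e * Sc q (Gf R' i k j) y) x :=
      dAt ((coord_smooth e).mul (Sc_contDiff (hGs i k j) q)) x
    have d2 : DifferentiableAt ℝ (fun y : Fin D → ℝ => y i * Sc q (Gf R' k e j) y) x :=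
      dAt ((coord_smooth i).mul (Sc_contDiff (hGs k e j) q)) x
    have d3 : DifferentiableAt ℝ (fun y : Fin D → ℝ => y k * Sc q (Gf R' e i j) y) x :=
      dAt ((coord_smooth k).mul (Sc_contDiff (hGs e i j) q)) x
    rw [pd_add (d1.fun_add d2) d3 e, pd_add d1 d2 e,
      pd_coord_mul (dAt (Sc_contDiff (hGs i k j) q) x) e e,
      pd_coord_mul (dAt (Sc_contDiff (hGs k e j) q) x) i e,
      pd_coord_mul (dAt (Sc_contDiff (hGs e i j) q) x) k e,
      if_pos rfl,
      pd_Sc (hGs i k j) q e x, pd_Sc (hGs k e j) q e x, pd_Sc (hGs e i j) q e x]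
  rw [Finset.sum_congr rfl fun e _ => step1 e]
  rw [Finset.sum_add_distrib, Finset.sum_add_distrib]
  have S1 : ∑ e : Fin D, (x e * Sc (q+1) (pd e (Gf R' i k j)) x + Sc q (Gf R' i k j) x)
      = (∑ e : Fin D, x e * Sc (q+1) (pd e (Gf R' i k j)) x)
        + ((q:ℝ)+3) * Sc q (Gf R' i k j) x := by
    have hD : (D:ℝ) = (q:ℝ)+3 := by rw [hq]; push_cast; ring
    rw [Finset.sum_add_distrib, Finset.sum_const, Finset.card_univ, Fintype.card_fin,
      nsmul_eq_mul, hD]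
  have S2 : ∑ e : Fin D, (x i * Sc (q+1) (pd e (Gf R' k e j)) x
      + (if i = e then Sc q (Gf R' k e j) x else 0)) = -Sc q (Gf R' i k j) x := by
    rw [Finset.sum_add_distrib, ← Finset.mul_sum]
    have h1 : ∑ e : Fin D, Sc (q+1) (pd e (Gf R' k e j)) x = 0 := by
      have := (Sc_sum Finset.univ (fun e => pd e (Gf R' k e j))
        (fun e => (smooth_pd (hGs k e j) e).continuous) (q+1) x).symm
      rw [this]
      exact Sc_zerocongr (fun y => Gdiv2 R' hsmooth hdiv k j y) (q+1) x
    rw [h1, mul_zero, zero_add, Finset.sum_ite_eq Finset.univ i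
      (fun e => Sc q (Gf R' k e j) x), if_pos (Finset.mem_univ i)]
    exact Sc_negcongr (fun y => Ganti R' hsmooth hanti1 k i j y) q x
  have S3 : ∑ e : Fin D, (x k * Sc (q+1) (pd e (Gf R' e i j)) x
      + (if k = e then Sc q (Gf R' e i j) x else 0)) = -Sc q (Gf R' i k j) x := by
    rw [Finset.sum_add_distrib, ← Finset.mul_sum]
    have h1 : ∑ e : Fin D, Sc (q+1) (pd e (Gf R' e i j)) x = 0 := by
      have := (Sc_sum Finset.univ (fun e => pd e (Gf R' e i j))
        (fun e => (smooth_pd (hGs e i j) e).continuous) (q+1) x).symm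
      rw [this]
      exact Sc_zerocongr (fun y => Gdiv1 R' hsmooth hanti1 hdiv i j y) (q+1) x
    rw [h1, mul_zero, zero_add, Finset.sum_ite_eq Finset.univ k
      (fun e => Sc q (Gf R' e i j) x), if_pos (Finset.mem_univ k)]
    exact Sc_negcongr (fun y => Ganti R' hsmooth hanti1 k i j y) q x
  rw [S1, S2, S3]
  have hftc := Sc_ftc (hGs i k j) q x
  linarith

include hsmooth hanti2 in
theorem taudiv (q : ℕ) (hq : D = q + 3) (i k j p : Fin D) (x : Fin D → ℝ) :
    ∑ r, pd r (tauF R' q i k j p r) x = R' i k j p x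
      + (x j * Sc (q+1) (Gf R' i k p) x - x p * Sc (q+1) (Gf R' i k j) x) := by
  have step1 : ∀ r : Fin D, pd r (tauF R' q i k j p r) x =
      ((x j * Sc (q+1) (pd r (R' i k p r)) x + (if j = r then Sc q (R' i k p r) x else 0))
      + (x p * Sc (q+1) (pd r (R' i k r j)) x + (if p = r then Sc q (R' i k r j) x else 0)))
      + (x r * Sc (q+1) (pd r (R' i k j p)) x + Sc q (R' i k j p) x) := by
    intro r
    have hu : tauF R' q i k j p r = fun y =>
        (y j * Sc q (R' i k p r) y + y p * Sc q (R' i k r j) y)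
        + y r * Sc q (R' i k j p) y := rfl
    rw [hu]
    have d1 : DifferentiableAt ℝ (fun y : Fin D → ℝ => y j * Sc q (R' i k p r) y) x :=
      dAt ((coord_smooth j).mul (Sc_contDiff (hsmooth i k p r) q)) x
    have d2 : DifferentiableAt ℝ (fun y : Fin D → ℝ => y p * Sc q (R' i k r j) y) x :=
      dAt ((coord_smooth p).mul (Sc_contDiff (hsmooth i k r j) q)) x
    have d3 : DifferentiableAt ℝ (fun y : Fin D → ℝ => y r * Sc q (R' i k j p) y) x :=
      dAt ((coord_smooth r).mul (Sc_contDiff (hsmooth i k j p) q)) x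
    rw [pd_add (d1.fun_add d2) d3 r, pd_add d1 d2 r,
      pd_coord_mul (dAt (Sc_contDiff (hsmooth i k p r) q) x) j r,
      pd_coord_mul (dAt (Sc_contDiff (hsmooth i k r j) q) x) p r,
      pd_coord_mul (dAt (Sc_contDiff (hsmooth i k j p) q) x) r r,
      if_pos rfl,
      pd_Sc (hsmooth i k p r) q r x, pd_Sc (hsmooth i k r j) q r x,
      pd_Sc (hsmooth i k j p) q r x]
  rw [Finset.sum_congr rfl fun r _ => step1 r]
  rw [Finset.sum_add_distrib, Finset.sum_add_distrib]
  have S1 : ∑ r : Fin D, (x j * Sc (q+1) (pd r (R' i k p r)) x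
      + (if j = r then Sc q (R' i k p r) x else 0))
      = x j * Sc (q+1) (Gf R' i k p) x - Sc q (R' i k j p) x := by
    rw [Finset.sum_add_distrib, ← Finset.mul_sum]
    have h1 : ∑ r : Fin D, Sc (q+1) (pd r (R' i k p r)) x = Sc (q+1) (Gf R' i k p) x := by
      rw [← Sc_sum Finset.univ (fun r => pd r (R' i k p r))
        (fun r => (smooth_pd (hsmooth i k p r) r).continuous) (q+1) x]
      rfl
    rw [h1, Finset.sum_ite_eq Finset.univ j (fun r => Sc q (R' i k p r) x),
      if_pos (Finset.mem_univ j)]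
    rw [Sc_negcongr (fun y => hanti2 i k p j y) q x]
    ring
  have S2 : ∑ r : Fin D, (x p * Sc (q+1) (pd r (R' i k r j)) x
      + (if p = r then Sc q (R' i k r j) x else 0))
      = -(x p * Sc (q+1) (Gf R' i k j) x) - Sc q (R' i k j p) x := by
    rw [Finset.sum_add_distrib, ← Finset.mul_sum]
    have h1 : ∑ r : Fin D, Sc (q+1) (pd r (R' i k r j)) x
        = -Sc (q+1) (Gf R' i k j) x := by
      rw [← Sc_sum Finset.univ (fun r => pd r (R' i k r j))
        (fun r => (smooth_pd (hsmooth i k r j) r).continuous) (q+1) x]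
      apply Sc_negcongr
      intro y
      rw [Gf, ← Finset.sum_neg_distrib]
      refine Finset.sum_congr rfl fun r _ => ?_
      rw [← pd_neg (f := R' i k j r) r]
      exact pd_congr (fun z => by rw [hanti2 i k j r z]; ring) r y
    rw [h1, Finset.sum_ite_eq Finset.univ p (fun r => Sc q (R' i k r j) x),
      if_pos (Finset.mem_univ p)]
    rw [Sc_negcongr (fun y => hanti2 i k p j y) q x]
    ring
  have S3 : ∑ r : Fin D, (x r * Sc (q+1) (pd r (R' i k j p)) x + Sc q (R' i k j p) x)
      = (∑ r : Fin D, x r * Sc (q+1) (pd r (R' i k j p)) x)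
        + ((q:ℝ)+3) * Sc q (R' i k j p) x := by
    have hD : (D:ℝ) = (q:ℝ)+3 := by rw [hq]; push_cast; ring
    rw [Finset.sum_add_distrib, Finset.sum_const, Finset.card_univ, Fintype.card_fin,
      nsmul_eq_mul, hD]
  rw [S1, S2, S3]
  have hftc := Sc_ftc (hsmooth i k j p) q x
  linarith

theorem Wrot (q : ℕ) (e i k j : Fin D) (y : Fin D → ℝ) :
    Wf R' q e i k j y = Wf R' q k e i j y := by
  simp only [Wf]; ring

include hsmooth hanti1 hdiv in
theorem mudiv (q : ℕ) (hq : D = q + 3) (i k j p : Fin D) (x : Fin D → ℝ) :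
    ∑ r, pd r (muF R' q i k j p r) x
      = -(x i * Sc (q+1) (Gf R' j p k) x) + x k * Sc (q+1) (Gf R' j p i) x
        + (Sc q (Wf R' q j p k i) x - Sc q (Wf R' q j p i k) x) := by
  have hWs : ∀ e a b c : Fin D, ContDiff ℝ (⊤:ℕ∞) (Wf R' q e a b c) := fun e a b c =>
    Wf_smooth R' hsmooth q e a b c
  have step1 : ∀ r : Fin D, pd r (muF R' q i k j p r) x =
      -((x i * Sc (q+1) (pd r (Wf R' q j p r k)) x
          + (if i = r then Sc q (Wf R' q j p r k) x else 0)))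
      + (x k * Sc (q+1) (pd r (Wf R' q j p r i)) x
          + (if k = r then Sc q (Wf R' q j p r i) x else 0)) := by
    intro r
    have hu : muF R' q i k j p r = fun y =>
        -(y i * Sc q (Wf R' q j p r k) y) + y k * Sc q (Wf R' q j p r i) y := rfl
    rw [hu]
    have d1 : DifferentiableAt ℝ (fun y : Fin D → ℝ => y i * Sc q (Wf R' q j p r k) y) x :=
      dAt ((coord_smooth i).mul (Sc_contDiff (hWs j p r k) q)) x
    have d2 : DifferentiableAt ℝ (fun y : Fin D → ℝ => y k * Sc q (Wf R' q j p r i) y) x :=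
      dAt ((coord_smooth k).mul (Sc_contDiff (hWs j p r i) q)) x
    rw [pd_add d1.fun_neg d2 r, pd_neg (f := fun y : Fin D → ℝ => y i * Sc q (Wf R' q j p r k) y) r,
      pd_coord_mul (dAt (Sc_contDiff (hWs j p r k) q) x) i r,
      pd_coord_mul (dAt (Sc_contDiff (hWs j p r i) q) x) k r,
      pd_Sc (hWs j p r k) q r x, pd_Sc (hWs j p r i) q r x]
  rw [Finset.sum_congr rfl fun r _ => step1 r, Finset.sum_add_distrib,
    Finset.sum_neg_distrib]
  have SA : ∑ r : Fin D, (x i * Sc (q+1) (pd r (Wf R' q j p r k)) x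
      + (if i = r then Sc q (Wf R' q j p r k) x else 0))
      = x i * Sc (q+1) (Gf R' j p k) x + Sc q (Wf R' q j p i k) x := by
    rw [Finset.sum_add_distrib, ← Finset.mul_sum]
    have h1 : ∑ r : Fin D, Sc (q+1) (pd r (Wf R' q j p r k)) x
        = Sc (q+1) (Gf R' j p k) x := by
      have e1 : ∀ r : Fin D, Sc (q+1) (pd r (Wf R' q j p r k)) x
          = Sc (q+1) (pd r (Wf R' q r j p k)) x := fun r =>
        Sc_congr (fun y => pd_congr (fun z => Wrot R' q j p r k z) r y) (q+1) x
      rw [Finset.sum_congr rfl fun r _ => e1 r,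
        ← Sc_sum Finset.univ (fun r => pd r (Wf R' q r j p k))
          (fun r => (smooth_pd (hWs r j p k) r).continuous) (q+1) x]
      exact Sc_congr (fun y => Wdiv R' hsmooth hanti1 hdiv q hq j p k y) (q+1) x
    rw [h1, Finset.sum_ite_eq Finset.univ i (fun r => Sc q (Wf R' q j p r k) x),
      if_pos (Finset.mem_univ i)]
  have SB : ∑ r : Fin D, (x k * Sc (q+1) (pd r (Wf R' q j p r i)) x
      + (if k = r then Sc q (Wf R' q j p r i) x else 0))
      = x k * Sc (q+1) (Gf R' j p i) x + Sc q (Wf R' q j p k i) x := by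
    rw [Finset.sum_add_distrib, ← Finset.mul_sum]
    have h1 : ∑ r : Fin D, Sc (q+1) (pd r (Wf R' q j p r i)) x
        = Sc (q+1) (Gf R' j p i) x := by
      have e1 : ∀ r : Fin D, Sc (q+1) (pd r (Wf R' q j p r i)) x
          = Sc (q+1) (pd r (Wf R' q r j p i)) x := fun r =>
        Sc_congr (fun y => pd_congr (fun z => Wrot R' q j p r i z) r y) (q+1) x
      rw [Finset.sum_congr rfl fun r _ => e1 r,
        ← Sc_sum Finset.univ (fun r => pd r (Wf R' q r j p i))
          (fun r => (smooth_pd (hWs r j p i) r).continuous) (q+1) x]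
      exact Sc_congr (fun y => Wdiv R' hsmooth hanti1 hdiv q hq j p i y) (q+1) x
    rw [h1, Finset.sum_ite_eq Finset.univ k (fun r => Sc q (Wf R' q j p r i) x),
      if_pos (Finset.mem_univ k)]
  rw [SA, SB]
  ring

include hsmooth hanti1 hanti2 hpair hbianchi in
theorem Wzero (q : ℕ) (i k j p : Fin D) (y : Fin D → ℝ) :
    Wf R' q j p k i y = Wf R' q j p i k y + Wf R' q i k j p y - Wf R' q i k p j y := by
  have hGs : ∀ a b c : Fin D, ContDiff ℝ (⊤:ℕ∞) (Gf R' a b c) := fun a b c =>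
    Gf_smooth R' hsmooth a b c
  have hcont : ∀ a b c : Fin D, Continuous (Gf R' a b c) := fun a b c => (hGs a b c).continuous
  -- Sc-level split of a G into two via Gmaster
  have split : ∀ a b c : Fin D,
      Sc q (Gf R' a b c) y = Sc q (Gf R' a c b) y - Sc q (Gf R' b c a) y := by
    intro a b c
    have h1 : ∀ z, Gf R' a b c z = Gf R' a c b z + -(Gf R' b c a z) := by
      intro z
      rw [Gmaster R' hsmooth hanti2 hpair hbianchi a b c z]
      ring
    rw [Sc_congr h1 q y, Sc_add (hcont a c b) ((hcont b c a).fun_neg) q y, Sc_neg q y]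
    ring
  have hneg : ∀ a b c : Fin D, Sc q (Gf R' a b c) y = -Sc q (Gf R' b a c) y := fun a b c =>
    Sc_negcongr (fun z => Ganti R' hsmooth hanti1 a b c z) q y
  simp only [Wf]
  -- coefficients: y j, y p, y k, y i groupings
  have ha : Sc q (Gf R' p k i) y = Sc q (Gf R' p i k) y + Sc q (Gf R' i k p) y := by
    rw [split p k i, hneg k i p]; ring
  have hb : Sc q (Gf R' k j i) y = Sc q (Gf R' i j k) y - Sc q (Gf R' i k j) y := by
    have := split i k j
    linarith
  have hc : Sc q (Gf R' j p i) y = Sc q (Gf R' j i p) y - Sc q (Gf R' p i j) y := split j p i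
  have hd : Sc q (Gf R' k p j) y = Sc q (Gf R' j p k) y + Sc q (Gf R' k j p) y := by
    rw [split k p j, hneg p j k]; ring
  linear_combination y j * ha + y p * hb + y k * hc + y i * hd

include hsmooth hanti1 in
theorem Wswap12 (q : ℕ) (e i k j : Fin D) (y : Fin D → ℝ) :
    Wf R' q e i k j y = -Wf R' q i e k j y := by
  have hneg : ∀ a b c : Fin D, Sc q (Gf R' a b c) y = -Sc q (Gf R' b a c) y := fun a b c =>
    Sc_negcongr (fun z => Ganti R' hsmooth hanti1 a b c z) q y
  simp only [Wf]
  linear_combination y e * hneg i k j + y i * hneg k e j + y k * hneg e i j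

include hsmooth hanti1 in
theorem Wswap23 (q : ℕ) (e i k j : Fin D) (y : Fin D → ℝ) :
    Wf R' q e i k j y = -Wf R' q e k i j y := by
  have hneg : ∀ a b c : Fin D, Sc q (Gf R' a b c) y = -Sc q (Gf R' b a c) y := fun a b c =>
    Sc_negcongr (fun z => Ganti R' hsmooth hanti1 a b c z) q y
  simp only [Wf]
  linear_combination y e * hneg i k j + y i * hneg k e j + y k * hneg e i j

include hanti1 in
theorem xi_anti1 (q : ℕ) (i k j p r : Fin D) (x : Fin D → ℝ) :
    xiF R' q i k j p r x = -xiF R' q k i j p r x := by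
  simp only [xiF, tauF, muF]
  have h1 : Sc q (R' k i p r) x = -Sc q (R' i k p r) x :=
    Sc_negcongr (fun y => hanti1 k i p r y) q x
  have h2 : Sc q (R' k i r j) x = -Sc q (R' i k r j) x :=
    Sc_negcongr (fun y => hanti1 k i r j y) q x
  have h3 : Sc q (R' k i j p) x = -Sc q (R' i k j p) x :=
    Sc_negcongr (fun y => hanti1 k i j p y) q x
  rw [h1, h2, h3]
  ring

include hsmooth hanti1 hanti2 in
theorem xi_anti2 (q : ℕ) (i k j p r : Fin D) (x : Fin D → ℝ) :
    xiF R' q i k j p r x = -xiF R' q i k p j r x := by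
  simp only [xiF, tauF, muF]
  have h1 : Sc q (R' i k j r) x = -Sc q (R' i k r j) x :=
    Sc_negcongr (fun y => hanti2 i k j r y) q x
  have h2 : Sc q (R' i k r p) x = -Sc q (R' i k p r) x :=
    Sc_negcongr (fun y => hanti2 i k r p y) q x
  have h3 : Sc q (R' i k p j) x = -Sc q (R' i k j p) x :=
    Sc_negcongr (fun y => hanti2 i k p j y) q x
  have h4 : Sc q (Wf R' q p j r k) x = -Sc q (Wf R' q j p r k) x :=
    Sc_negcongr (fun y => Wswap12 R' hsmooth hanti1 q p j r k y) q x
  have h5 : Sc q (Wf R' q p j r i) x = -Sc q (Wf R' q j p r i) x :=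
    Sc_negcongr (fun y => Wswap12 R' hsmooth hanti1 q p j r i y) q x
  rw [h1, h2, h3, h4, h5]
  ring

include hsmooth hanti1 hanti2 in
theorem xi_anti3 (q : ℕ) (i k j p r : Fin D) (x : Fin D → ℝ) :
    xiF R' q i k j p r x = -xiF R' q i k j r p x := by
  simp only [xiF, tauF, muF]
  have h1 : Sc q (R' i k r p) x = -Sc q (R' i k p r) x :=
    Sc_negcongr (fun y => hanti2 i k r p y) q x
  have h2 : Sc q (R' i k p j) x = -Sc q (R' i k j p) x :=
    Sc_negcongr (fun y => hanti2 i k p j y) q x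
  have h3 : Sc q (R' i k j r) x = -Sc q (R' i k r j) x :=
    Sc_negcongr (fun y => hanti2 i k j r y) q x
  have h4 : Sc q (Wf R' q j r p k) x = -Sc q (Wf R' q j p r k) x :=
    Sc_negcongr (fun y => Wswap23 R' hsmooth hanti1 q j r p k y) q x
  have h5 : Sc q (Wf R' q j r p i) x = -Sc q (Wf R' q j p r i) x :=
    Sc_negcongr (fun y => Wswap23 R' hsmooth hanti1 q j r p i y) q x
  rw [h1, h2, h3, h4, h5]
  ring

include hanti2 hbianchi in
theorem ScRcyc (q : ℕ) (a b c d : Fin D) (x : Fin D → ℝ)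
    (hsm : ∀ i k j p, Continuous (R' i k j p)) :
    Sc q (R' a b c d) x + Sc q (R' a c d b) x + Sc q (R' a d b c) x = 0 := by
  have h1 : ∀ y, R' a b c d y = -R' a c d b y + -(R' a d b c y) := by
    intro y
    have := Rcyc R' hanti2 hbianchi a b c d y
    linarith
  rw [Sc_congr h1 q x, Sc_add (hsm a c d b).fun_neg (hsm a d b c).fun_neg q x, Sc_neg q x, Sc_neg q x]
  ring

include hsmooth in
theorem ScW (q : ℕ) (c d e b : Fin D) (x : Fin D → ℝ) :
    Sc q (Wf R' q c d e b) x
      = x c * Sc (q+1) (Sc q (Gf R' d e b)) x + x d * Sc (q+1) (Sc q (Gf R' e c b)) x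
        + x e * Sc (q+1) (Sc q (Gf R' c d b)) x := by
  have hGs : ∀ a b' c' : Fin D, ContDiff ℝ (⊤:ℕ∞) (Gf R' a b' c') := fun a b' c' =>
    Gf_smooth R' hsmooth a b' c'
  have hc : ∀ (u : Fin D) (a b' c' : Fin D),
      Continuous (fun y : Fin D → ℝ => y u * Sc q (Gf R' a b' c') y) :=
    fun u a b' c' => ((coord_smooth u).continuous).mul (Sc_contDiff (hGs a b' c') q).continuous
  have hu : ∀ y, Wf R' q c d e b y =
      (fun y : Fin D → ℝ => y c * Sc q (Gf R' d e b) y + y d * Sc q (Gf R' e c b) y) y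
      + (fun y : Fin D → ℝ => y e * Sc q (Gf R' c d b) y) y := fun y => rfl
  rw [Sc_congr hu q x, Sc_add ((hc c d e b).fun_add (hc d e c b)) (hc e c d b) q x,
    Sc_add (hc c d e b) (hc d e c b) q x,
    Sc_coord_pull c q x, Sc_coord_pull d q x, Sc_coord_pull e q x]

include hsmooth hanti2 hbianchi in
theorem altxi (q : ℕ) (v : Fin 5 → Fin D) (x : Fin D → ℝ) :
    ∑ σ : Equiv.Perm (Fin 5), ((Equiv.Perm.sign σ : ℤ) : ℝ)
      * xiF R' q (v (σ 0)) (v (σ 1)) (v (σ 2)) (v (σ 3)) (v (σ 4)) x = 0 := by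
  have hsm : ∀ i k j p, Continuous (R' i k j p) := fun i k j p => (hsmooth i k j p).continuous
  set SS : Fin D → Fin D → Fin D → ℝ :=
    fun u uu uuu => Sc (q+1) (Sc q (Gf R' u uu uuu)) x with hSS
  set g1 : (Fin 5 → Fin D) → ℝ :=
    fun w => x (w 2) * Sc q (R' (w 0) (w 1) (w 3) (w 4)) x with hg1
  set g2 : (Fin 5 → Fin D) → ℝ :=
    fun w => x (w 3) * Sc q (R' (w 0) (w 1) (w 4) (w 2)) x with hg2
  set g3 : (Fin 5 → Fin D) → ℝ :=
    fun w => x (w 4) * Sc q (R' (w 0) (w 1) (w 2) (w 3)) x with hg3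
  set g4 : (Fin 5 → Fin D) → ℝ :=
    fun w => -(x (w 0) * (x (w 2) * SS (w 3) (w 4) (w 1))) with hg4
  set g5 : (Fin 5 → Fin D) → ℝ :=
    fun w => -(x (w 0) * (x (w 3) * SS (w 4) (w 2) (w 1))) with hg5
  set g6 : (Fin 5 → Fin D) → ℝ :=
    fun w => -(x (w 0) * (x (w 4) * SS (w 2) (w 3) (w 1))) with hg6
  set g7 : (Fin 5 → Fin D) → ℝ :=
    fun w => x (w 1) * (x (w 2) * SS (w 3) (w 4) (w 0)) with hg7
  set g8 : (Fin 5 → Fin D) → ℝ :=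
    fun w => x (w 1) * (x (w 3) * SS (w 4) (w 2) (w 0)) with hg8
  set g9 : (Fin 5 → Fin D) → ℝ :=
    fun w => x (w 1) * (x (w 4) * SS (w 2) (w 3) (w 0)) with hg9
  have key : ∀ w : Fin 5 → Fin D, xiF R' q (w 0) (w 1) (w 2) (w 3) (w 4) x
      = g1 w + g2 w + g3 w + (g4 w + g5 w + g6 w) + (g7 w + g8 w + g9 w) := by
    intro w
    simp only [hg1, hg2, hg3, hg4, hg5, hg6, hg7, hg8, hg9, hSS]
    simp only [xiF, tauF, muF]
    rw [ScW R' hsmooth q (w 2) (w 3) (w 4) (w 1) x,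
      ScW R' hsmooth q (w 2) (w 3) (w 4) (w 0) x]
    ring
  have hS : (∑ σ : Equiv.Perm (Fin 5), ((Equiv.Perm.sign σ : ℤ) : ℝ)
        * xiF R' q (v (σ 0)) (v (σ 1)) (v (σ 2)) (v (σ 3)) (v (σ 4)) x)
      = (∑ σ : Equiv.Perm (Fin 5), ((Equiv.Perm.sign σ : ℤ) : ℝ) * g1 (v ∘ ⇑σ))
      + (∑ σ : Equiv.Perm (Fin 5), ((Equiv.Perm.sign σ : ℤ) : ℝ) * g2 (v ∘ ⇑σ))
      + (∑ σ : Equiv.Perm (Fin 5), ((Equiv.Perm.sign σ : ℤ) : ℝ) * g3 (v ∘ ⇑σ))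
      + (∑ σ : Equiv.Perm (Fin 5), ((Equiv.Perm.sign σ : ℤ) : ℝ) * g4 (v ∘ ⇑σ))
      + (∑ σ : Equiv.Perm (Fin 5), ((Equiv.Perm.sign σ : ℤ) : ℝ) * g5 (v ∘ ⇑σ))
      + (∑ σ : Equiv.Perm (Fin 5), ((Equiv.Perm.sign σ : ℤ) : ℝ) * g6 (v ∘ ⇑σ))
      + (∑ σ : Equiv.Perm (Fin 5), ((Equiv.Perm.sign σ : ℤ) : ℝ) * g7 (v ∘ ⇑σ))
      + (∑ σ : Equiv.Perm (Fin 5), ((Equiv.Perm.sign σ : ℤ) : ℝ) * g8 (v ∘ ⇑σ))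
      + (∑ σ : Equiv.Perm (Fin 5), ((Equiv.Perm.sign σ : ℤ) : ℝ) * g9 (v ∘ ⇑σ)) := by
    rw [← Finset.sum_add_distrib, ← Finset.sum_add_distrib, ← Finset.sum_add_distrib,
      ← Finset.sum_add_distrib, ← Finset.sum_add_distrib, ← Finset.sum_add_distrib,
      ← Finset.sum_add_distrib, ← Finset.sum_add_distrib]
    refine Finset.sum_congr rfl fun σ _ => ?_
    have hk := key (v ∘ ⇑σ)
    simp only [Function.comp_apply] at hk
    rw [hk]
    ring
  rw [hS]
  have hScyc : ∀ a b c d : Fin D,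
      Sc q (R' a b c d) x + Sc q (R' a c d b) x + Sc q (R' a d b c) x = 0 := fun a b c d =>
    ScRcyc R' hanti2 hbianchi q a b c d x hsm
  have z1 : (∑ σ : Equiv.Perm (Fin 5), ((Equiv.Perm.sign σ : ℤ) : ℝ) * g1 (v ∘ ⇑σ)) = 0 := by
    apply alt_cyc g1 (Equiv.swap (1:Fin 5) 3 * Equiv.swap 3 4)
    · rw [Equiv.Perm.sign_mul, Equiv.Perm.sign_swap (by decide), Equiv.Perm.sign_swap (by decide)]
      decide
    · intro w
      have c0 : (Equiv.swap (1:Fin 5) 3 * Equiv.swap (3:Fin 5) 4) 0 = 0 := by decide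
      have c1 : (Equiv.swap (1:Fin 5) 3 * Equiv.swap (3:Fin 5) 4) 1 = 3 := by decide
      have c2 : (Equiv.swap (1:Fin 5) 3 * Equiv.swap (3:Fin 5) 4) 2 = 2 := by decide
      have c3 : (Equiv.swap (1:Fin 5) 3 * Equiv.swap (3:Fin 5) 4) 3 = 4 := by decide
      have c4 : (Equiv.swap (1:Fin 5) 3 * Equiv.swap (3:Fin 5) 4) 4 = 1 := by decide
      simp only [hg1, Function.comp_apply, c0, c1, c2, c3, c4]
      linear_combination x (w 2) * hScyc (w 0) (w 1) (w 3) (w 4)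
  have z2 : (∑ σ : Equiv.Perm (Fin 5), ((Equiv.Perm.sign σ : ℤ) : ℝ) * g2 (v ∘ ⇑σ)) = 0 := by
    apply alt_cyc g2 (Equiv.swap (1:Fin 5) 4 * Equiv.swap 4 2)
    · rw [Equiv.Perm.sign_mul, Equiv.Perm.sign_swap (by decide), Equiv.Perm.sign_swap (by decide)]
      decide
    · intro w
      have c0 : (Equiv.swap (1:Fin 5) 4 * Equiv.swap (4:Fin 5) 2) 0 = 0 := by decide
      have c1 : (Equiv.swap (1:Fin 5) 4 * Equiv.swap (4:Fin 5) 2) 1 = 4 := by decide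
      have c2 : (Equiv.swap (1:Fin 5) 4 * Equiv.swap (4:Fin 5) 2) 2 = 1 := by decide
      have c3 : (Equiv.swap (1:Fin 5) 4 * Equiv.swap (4:Fin 5) 2) 3 = 3 := by decide
      have c4 : (Equiv.swap (1:Fin 5) 4 * Equiv.swap (4:Fin 5) 2) 4 = 2 := by decide
      simp only [hg2, Function.comp_apply, c0, c1, c2, c3, c4]
      linear_combination x (w 3) * hScyc (w 0) (w 1) (w 4) (w 2)
  have z3 : (∑ σ : Equiv.Perm (Fin 5), ((Equiv.Perm.sign σ : ℤ) : ℝ) * g3 (v ∘ ⇑σ)) = 0 := by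
    apply alt_cyc g3 (Equiv.swap (1:Fin 5) 2 * Equiv.swap 2 3)
    · rw [Equiv.Perm.sign_mul, Equiv.Perm.sign_swap (by decide), Equiv.Perm.sign_swap (by decide)]
      decide
    · intro w
      have c0 : (Equiv.swap (1:Fin 5) 2 * Equiv.swap (2:Fin 5) 3) 0 = 0 := by decide
      have c1 : (Equiv.swap (1:Fin 5) 2 * Equiv.swap (2:Fin 5) 3) 1 = 2 := by decide
      have c2 : (Equiv.swap (1:Fin 5) 2 * Equiv.swap (2:Fin 5) 3) 2 = 3 := by decide
      have c3 : (Equiv.swap (1:Fin 5) 2 * Equiv.swap (2:Fin 5) 3) 3 = 1 := by decide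
      have c4 : (Equiv.swap (1:Fin 5) 2 * Equiv.swap (2:Fin 5) 3) 4 = 4 := by decide
      simp only [hg3, Function.comp_apply, c0, c1, c2, c3, c4]
      linear_combination x (w 4) * hScyc (w 0) (w 1) (w 2) (w 3)
  have z4 : (∑ σ : Equiv.Perm (Fin 5), ((Equiv.Perm.sign σ : ℤ) : ℝ) * g4 (v ∘ ⇑σ)) = 0 := by
    apply alt_pair g4 0 2 (by decide)
    intro w
    have c0 : (Equiv.swap (0:Fin 5) 2) 0 = 2 := by decide
    have c1 : (Equiv.swap (0:Fin 5) 2) 1 = 1 := by decide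
    have c2 : (Equiv.swap (0:Fin 5) 2) 2 = 0 := by decide
    have c3 : (Equiv.swap (0:Fin 5) 2) 3 = 3 := by decide
    have c4 : (Equiv.swap (0:Fin 5) 2) 4 = 4 := by decide
    simp only [hg4, Function.comp_apply, c0, c1, c2, c3, c4]
    ring
  have z5 : (∑ σ : Equiv.Perm (Fin 5), ((Equiv.Perm.sign σ : ℤ) : ℝ) * g5 (v ∘ ⇑σ)) = 0 := by
    apply alt_pair g5 0 3 (by decide)
    intro w
    have c0 : (Equiv.swap (0:Fin 5) 3) 0 = 3 := by decide
    have c1 : (Equiv.swap (0:Fin 5) 3) 1 = 1 := by decide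
    have c2 : (Equiv.swap (0:Fin 5) 3) 2 = 2 := by decide
    have c3 : (Equiv.swap (0:Fin 5) 3) 3 = 0 := by decide
    have c4 : (Equiv.swap (0:Fin 5) 3) 4 = 4 := by decide
    simp only [hg5, Function.comp_apply, c0, c1, c2, c3, c4]
    ring
  have z6 : (∑ σ : Equiv.Perm (Fin 5), ((Equiv.Perm.sign σ : ℤ) : ℝ) * g6 (v ∘ ⇑σ)) = 0 := by
    apply alt_pair g6 0 4 (by decide)
    intro w
    have c0 : (Equiv.swap (0:Fin 5) 4) 0 = 4 := by decide
    have c1 : (Equiv.swap (0:Fin 5) 4) 1 = 1 := by decide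
    have c2 : (Equiv.swap (0:Fin 5) 4) 2 = 2 := by decide
    have c3 : (Equiv.swap (0:Fin 5) 4) 3 = 3 := by decide
    have c4 : (Equiv.swap (0:Fin 5) 4) 4 = 0 := by decide
    simp only [hg6, Function.comp_apply, c0, c1, c2, c3, c4]
    ring
  have z7 : (∑ σ : Equiv.Perm (Fin 5), ((Equiv.Perm.sign σ : ℤ) : ℝ) * g7 (v ∘ ⇑σ)) = 0 := by
    apply alt_pair g7 1 2 (by decide)
    intro w
    have c0 : (Equiv.swap (1:Fin 5) 2) 0 = 0 := by decide
    have c1 : (Equiv.swap (1:Fin 5) 2) 1 = 2 := by decide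
    have c2 : (Equiv.swap (1:Fin 5) 2) 2 = 1 := by decide
    have c3 : (Equiv.swap (1:Fin 5) 2) 3 = 3 := by decide
    have c4 : (Equiv.swap (1:Fin 5) 2) 4 = 4 := by decide
    simp only [hg7, Function.comp_apply, c0, c1, c2, c3, c4]
    ring
  have z8 : (∑ σ : Equiv.Perm (Fin 5), ((Equiv.Perm.sign σ : ℤ) : ℝ) * g8 (v ∘ ⇑σ)) = 0 := by
    apply alt_pair g8 1 3 (by decide)
    intro w
    have c0 : (Equiv.swap (1:Fin 5) 3) 0 = 0 := by decide
    have c1 : (Equiv.swap (1:Fin 5) 3) 1 = 3 := by decide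
    have c2 : (Equiv.swap (1:Fin 5) 3) 2 = 2 := by decide
    have c3 : (Equiv.swap (1:Fin 5) 3) 3 = 1 := by decide
    have c4 : (Equiv.swap (1:Fin 5) 3) 4 = 4 := by decide
    simp only [hg8, Function.comp_apply, c0, c1, c2, c3, c4]
    ring
  have z9 : (∑ σ : Equiv.Perm (Fin 5), ((Equiv.Perm.sign σ : ℤ) : ℝ) * g9 (v ∘ ⇑σ)) = 0 := by
    apply alt_pair g9 1 4 (by decide)
    intro w
    have c0 : (Equiv.swap (1:Fin 5) 4) 0 = 0 := by decide
    have c1 : (Equiv.swap (1:Fin 5) 4) 1 = 4 := by decide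
    have c2 : (Equiv.swap (1:Fin 5) 4) 2 = 2 := by decide
    have c3 : (Equiv.swap (1:Fin 5) 4) 3 = 3 := by decide
    have c4 : (Equiv.swap (1:Fin 5) 4) 4 = 1 := by decide
    simp only [hg9, Function.comp_apply, c0, c1, c2, c3, c4]
    ring
  rw [z1, z2, z3, z4, z5, z6, z7, z8, z9]
  ring

include hsmooth hanti2 hbianchi in
theorem halt5 (q : ℕ) (i k j p r : Fin D) (y : Fin D → ℝ) :
    alt5 (fun a b c d e => xiF R' q a b c d e) i k j p r y = 0 := by
  simp only [alt5]
  rw [altxi R' hsmooth hanti2 hbianchi q (![i,k,j,p,r]) y, mul_zero]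

include hsmooth hanti1 hanti2 hpair hbianchi hdiv in
theorem main (q : ℕ) (hq : D = q + 3) (i k j p : Fin D) (x : Fin D → ℝ) :
    R' i k j p x = ∑ r, pd r (fun y => (1/2 : ℝ) * xiF R' q i k j p r y
      + (1/2 : ℝ) * xiF R' q j p i k r y
      - alt5 (fun a b c d e => xiF R' q a b c d e) i k j p r y) x := by
  have hxis : ∀ a b c d e : Fin D, ContDiff ℝ (⊤:ℕ∞) (xiF R' q a b c d e) := fun a b c d e =>
    xiF_smooth R' hsmooth q a b c d e
  have hWc : ∀ a b c d : Fin D, Continuous (Wf R' q a b c d) := fun a b c d =>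
    (Wf_smooth R' hsmooth q a b c d).continuous
  have hfun : ∀ r : Fin D,
      pd r (fun y => (1/2 : ℝ) * xiF R' q i k j p r y + (1/2 : ℝ) * xiF R' q j p i k r y
        - alt5 (fun a' b' c' d' e' => xiF R' q a' b' c' d' e') i k j p r y) x
      = pd r (fun y => (1/2 : ℝ) * xiF R' q i k j p r y
          + (1/2 : ℝ) * xiF R' q j p i k r y) x := by
    intro r
    apply pd_congr
    intro y
    rw [halt5 R' hsmooth hanti2 hbianchi q i k j p r y]
    ring
  have hpd : ∀ r : Fin D,
      pd r (fun y => (1/2 : ℝ) * xiF R' q i k j p r y + (1/2 : ℝ) * xiF R' q j p i k r y) x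
      = (1/2 : ℝ) * pd r (xiF R' q i k j p r) x
        + (1/2 : ℝ) * pd r (xiF R' q j p i k r) x := by
    intro r
    rw [pd_add (dAt (contDiff_const.mul (hxis i k j p r)) x)
      (dAt (contDiff_const.mul (hxis j p i k r)) x) r,
      pd_const_mul (dAt (hxis i k j p r) x) (1/2 : ℝ) r,
      pd_const_mul (dAt (hxis j p i k r) x) (1/2 : ℝ) r]
  have xidiv : ∀ a b c d : Fin D, ∑ r, pd r (xiF R' q a b c d r) x
      = (∑ r, pd r (tauF R' q a b c d r) x) + (∑ r, pd r (muF R' q a b c d r) x) := by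
    intro a b c d
    have e1 : ∀ r : Fin D, pd r (xiF R' q a b c d r) x
        = pd r (tauF R' q a b c d r) x + pd r (muF R' q a b c d r) x := by
      intro r
      have hu : xiF R' q a b c d r = fun y =>
          tauF R' q a b c d r y + muF R' q a b c d r y := rfl
      rw [hu, pd_add (dAt (tauF_smooth R' hsmooth q a b c d r) x)
        (dAt (muF_smooth R' hsmooth q a b c d r) x) r]
    rw [Finset.sum_congr rfl fun r _ => e1 r, Finset.sum_add_distrib]
  have ScWzero : Sc q (Wf R' q j p k i) x
      = Sc q (Wf R' q j p i k) x + Sc q (Wf R' q i k j p) x - Sc q (Wf R' q i k p j) x := by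
    have h1 : ∀ y, Wf R' q j p k i y
        = (Wf R' q j p i k y + Wf R' q i k j p y) + -(Wf R' q i k p j y) := by
      intro y
      rw [Wzero R' hsmooth hanti1 hanti2 hpair hbianchi q i k j p y]
      ring
    rw [Sc_congr h1 q x, Sc_add ((hWc j p i k).fun_add (hWc i k j p)) (hWc i k p j).fun_neg q x,
      Sc_add (hWc j p i k) (hWc i k j p) q x, Sc_neg q x]
    ring
  rw [Finset.sum_congr rfl fun r _ => hfun r, Finset.sum_congr rfl fun r _ => hpd r,
    Finset.sum_add_distrib, ← Finset.mul_sum, ← Finset.mul_sum,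
    xidiv i k j p, xidiv j p i k,
    taudiv R' hsmooth hanti2 q hq i k j p x, taudiv R' hsmooth hanti2 q hq j p i k x,
    mudiv R' hsmooth hanti1 hdiv q hq i k j p x, mudiv R' hsmooth hanti1 hdiv q hq j p i k x]
  linear_combination (1/2 : ℝ) * hpair i k j p x - (1/2 : ℝ) * ScWzero

end Divergences

end Stmt4

/-- Proposition 2, case D ≥ 3, existence: every smooth tensor field R'
with Riemann symmetries and ∂_k∂_p R'^{ikjp} = 0 is of the form
R'^{ikjp} = ∂_r((1/2)ξ^{ikjpr} + (1/2)ξ^{jpikr} − ξ^{[ikjpr]}) with ξ^{ikjpr} = ξ^{[ik][jpr]}. -/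
theorem stmt_4 (D : ℕ) (hD : 3 ≤ D)
    (R' : Fin D → Fin D → Fin D → Fin D → (Fin D → ℝ) → ℝ)
    (hsmooth : ∀ i k j p, ContDiff ℝ (⊤ : ℕ∞) (R' i k j p))
    (hanti1 : ∀ i k j p x, R' i k j p x = - R' k i j p x)
    (hanti2 : ∀ i k j p x, R' i k j p x = - R' i k p j x)
    (hpair : ∀ i k j p x, R' i k j p x = R' j p i k x)
    (hbianchi : ∀ i k j p x,
      (1/6 : ℝ) * (R' i k j p x - R' i j k p x - R' i k p j x
        - R' i p j k x + R' i j p k x + R' i p k j x) = 0)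
    (hdiv : ∀ i j x, ∑ k, ∑ p, pd k (pd p (R' i k j p)) x = 0) :
    ∃ ξ : Fin D → Fin D → Fin D → Fin D → Fin D → (Fin D → ℝ) → ℝ,
      (∀ i k j p r, ContDiff ℝ (⊤ : ℕ∞) (ξ i k j p r)) ∧
      (∀ i k j p r x, ξ i k j p r x = - ξ k i j p r x) ∧
      (∀ i k j p r x, ξ i k j p r x = - ξ i k p j r x) ∧
      (∀ i k j p r x, ξ i k j p r x = - ξ i k j r p x) ∧
      (∀ i k j p x, R' i k j p x
        = ∑ r, pd r (fun y => (1/2 : ℝ) * ξ i k j p r y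
            + (1/2 : ℝ) * ξ j p i k r y - alt5 ξ i k j p r y) x) := by
  obtain ⟨q, hq⟩ : ∃ q : ℕ, D = q + 3 := ⟨D - 3, by omega⟩
  refine ⟨fun a b c d e => Stmt4.xiF R' q a b c d e, ?_, ?_, ?_, ?_, ?_⟩
  · exact fun i k j p r => Stmt4.xiF_smooth R' hsmooth q i k j p r
  · exact fun i k j p r x => Stmt4.xi_anti1 R' hanti1 q i k j p r x
  · exact fun i k j p r x => Stmt4.xi_anti2 R' hsmooth hanti1 hanti2 q i k j p r x
  · exact fun i k j p r x => Stmt4.xi_anti3 R' hsmooth hanti1 hanti2 q i k j p r x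
  · exact fun i k j p x =>
      Stmt4.main R' hsmooth hanti1 hanti2 hpair hbianchi hdiv q hq i k j p x
end

section
/- (Gauge invariance of formula (16c)) Let D ≥ 3, set a = 1/(D−2) and b = 1/((D−1)(D−2)). Let R_{ij} be a smooth symmetric tensor field on ℝ^D and ξ_i smooth functions, and set R'_{ij} := R_{ij} + ∂_{(i}ξ_{j)} − (∂_k ξ_k) δ_{ij}. Then R_{ij} and R'_{ij} produce the same tensor field via T_{ij} = a ΔR_{ij} − 2a ∂_k∂_{(i}R_{j)k} + b ∂_i∂_j R + (a ∂_k∂_p R_{kp} − b ΔR) δ_{ij}, where R = δ^{ij}R_{ij}. -/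
/-- Euclidean Laplacian Σ_k ∂_k∂_k. -/
noncomputable def lap {D : ℕ} (f : (Fin D → ℝ) → ℝ) : (Fin D → ℝ) → ℝ :=
  fun x => ∑ k, pd k (pd k f) x

/-- Formula (16c): T_{ij} = a ΔR_{ij} − 2a ∂_k∂_{(i}R_{j)k} + b ∂_i∂_j R
    + (a ∂_k∂_p R_{kp} − b ΔR) δ_{ij}, where R = δ^{ij} R_{ij}. -/
noncomputable def Tform {D : ℕ} (a b : ℝ) (Rt : Fin D → Fin D → (Fin D → ℝ) → ℝ)
    (i j : Fin D) : (Fin D → ℝ) → ℝ :=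
  fun x =>
    a * lap (Rt i j) x
    - 2 * a * ((1/2 : ℝ) * ((∑ k, pd k (pd i (Rt j k)) x) + (∑ k, pd k (pd j (Rt i k)) x)))
    + b * pd i (pd j (fun y => ∑ m, Rt m m y)) x
    + (a * (∑ k, ∑ p, pd k (pd p (Rt k p)) x) - b * lap (fun y => ∑ m, Rt m m y) x)
      * (if i = j then (1 : ℝ) else 0)

section Toolkit
variable {D : ℕ}

lemma contDiff_pd {f : (Fin D → ℝ) → ℝ} (hf : ContDiff ℝ (⊤ : ℕ∞) f) (k : Fin D) :
    ContDiff ℝ (⊤ : ℕ∞) (pd k f) := by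
  have h1 : ContDiff ℝ (⊤ : ℕ∞) (fderiv ℝ f) := (contDiff_infty_iff_fderiv.mp hf).2
  exact (ContinuousLinearMap.apply ℝ ℝ (Pi.single k (1:ℝ))).contDiff.comp h1

lemma pd_add {f g : (Fin D → ℝ) → ℝ} (hf : Differentiable ℝ f) (hg : Differentiable ℝ g)
    (k : Fin D) : pd k (fun y => f y + g y) = fun x => pd k f x + pd k g x := by
  funext x
  simp only [pd, fderiv_fun_add (hf x) (hg x), ContinuousLinearMap.add_apply]

lemma pd_sub {f g : (Fin D → ℝ) → ℝ} (hf : Differentiable ℝ f) (hg : Differentiable ℝ g)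
    (k : Fin D) : pd k (fun y => f y - g y) = fun x => pd k f x - pd k g x := by
  funext x
  simp only [pd, fderiv_fun_sub (hf x) (hg x), ContinuousLinearMap.sub_apply]

lemma pd_const_mul {f : (Fin D → ℝ) → ℝ} (hf : Differentiable ℝ f) (c : ℝ)
    (k : Fin D) : pd k (fun y => c * f y) = fun x => c * pd k f x := by
  funext x
  simp only [pd, fderiv_const_mul (hf x) c, ContinuousLinearMap.smul_apply, smul_eq_mul]

lemma pd_mul_const {f : (Fin D → ℝ) → ℝ} (hf : Differentiable ℝ f) (c : ℝ)
    (k : Fin D) : pd k (fun y => f y * c) = fun x => pd k f x * c := by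
  funext x
  simp only [pd, fderiv_mul_const (hf x) c, ContinuousLinearMap.smul_apply, smul_eq_mul]
  ring

lemma pd_sum {ι : Type*} (s : Finset ι) (F : ι → (Fin D → ℝ) → ℝ)
    (hF : ∀ m ∈ s, Differentiable ℝ (F m)) (k : Fin D) :
    pd k (fun y => ∑ m ∈ s, F m y) = fun x => ∑ m ∈ s, pd k (F m) x := by
  funext x
  simp only [pd, fderiv_fun_sum (fun m hm => (hF m hm) x), ContinuousLinearMap.sum_apply]

lemma pd_comm {f : (Fin D → ℝ) → ℝ} (hf : ContDiff ℝ (⊤ : ℕ∞) f) (a b : Fin D) :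
    pd a (pd b f) = pd b (pd a f) := by
  funext x
  have hdf : ContDiff ℝ (⊤ : ℕ∞) (fderiv ℝ f) := (contDiff_infty_iff_fderiv.mp hf).2
  have hdf2 : HasFDerivAt (fderiv ℝ f) (fderiv ℝ (fderiv ℝ f) x) x :=
    (hdf.differentiable (by simp) x).hasFDerivAt
  have key : ∀ v : Fin D → ℝ, fderiv ℝ (fun y => fderiv ℝ f y v) x
      = (ContinuousLinearMap.apply ℝ ℝ v).comp (fderiv ℝ (fderiv ℝ f) x) := by
    intro v
    exact (((ContinuousLinearMap.apply ℝ ℝ v).hasFDerivAt).comp x hdf2).fderiv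
  have hsymm : ∀ v w : Fin D → ℝ,
      fderiv ℝ (fderiv ℝ f) x v w = fderiv ℝ (fderiv ℝ f) x w v :=
    second_derivative_symmetric
      (fun y => (hf.differentiable (by simp) y).hasFDerivAt) hdf2
  show fderiv ℝ (fun y => fderiv ℝ f y (Pi.single b 1)) x (Pi.single a 1)
      = fderiv ℝ (fun y => fderiv ℝ f y (Pi.single a 1)) x (Pi.single b 1)
  rw [key, key]
  exact hsymm _ _
end Toolkit

section Derived
variable {D : ℕ}

lemma cdiff {f : (Fin D → ℝ) → ℝ} (hf : ContDiff ℝ (⊤ : ℕ∞) f) : Differentiable ℝ f :=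
  hf.differentiable (by simp)

lemma pd_pd_add {f g : (Fin D → ℝ) → ℝ} (hf : ContDiff ℝ (⊤ : ℕ∞) f)
    (hg : ContDiff ℝ (⊤ : ℕ∞) g) (a b : Fin D) (x : Fin D → ℝ) :
    pd a (pd b (fun y => f y + g y)) x = pd a (pd b f) x + pd a (pd b g) x := by
  rw [pd_add (cdiff hf) (cdiff hg) b,
    pd_add (cdiff (contDiff_pd hf b)) (cdiff (contDiff_pd hg b)) a]

lemma pd_pd_sum {ι : Type*} (s : Finset ι) (F : ι → (Fin D → ℝ) → ℝ)
    (hF : ∀ m ∈ s, ContDiff ℝ (⊤ : ℕ∞) (F m)) (a b : Fin D) :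
    pd a (pd b (fun y => ∑ m ∈ s, F m y)) = fun x => ∑ m ∈ s, pd a (pd b (F m)) x := by
  rw [pd_sum s F (fun m hm => cdiff (hF m hm)) b,
    pd_sum s (fun m => pd b (F m)) (fun m hm => cdiff (contDiff_pd (hF m hm) b)) a]

lemma pd_sum' {ι : Type*} (s : Finset ι) (F : ι → (Fin D → ℝ) → ℝ)
    (hF : ∀ m ∈ s, Differentiable ℝ (F m)) (k : Fin D) (x : Fin D → ℝ) :
    pd k (fun y => ∑ m ∈ s, F m y) x = ∑ m ∈ s, pd k (F m) x := by
  rw [pd_sum s F hF k]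

lemma pd_pd_sum' {ι : Type*} (s : Finset ι) (F : ι → (Fin D → ℝ) → ℝ)
    (hF : ∀ m ∈ s, ContDiff ℝ (⊤ : ℕ∞) (F m)) (a b : Fin D) (x : Fin D → ℝ) :
    pd a (pd b (fun y => ∑ m ∈ s, F m y)) x = ∑ m ∈ s, pd a (pd b (F m)) x := by
  rw [pd_pd_sum s F hF a b]

/-- Σ_k ∂_k ∂_i ∂_k f = ∂_i Δf -/
lemma sum_pd_comm {f : (Fin D → ℝ) → ℝ} (hf : ContDiff ℝ (⊤ : ℕ∞) f) (i : Fin D)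
    (x : Fin D → ℝ) : ∑ k, pd k (pd i (pd k f)) x = pd i (lap f) x := by
  calc ∑ k, pd k (pd i (pd k f)) x = ∑ k, pd i (pd k (pd k f)) x :=
        Finset.sum_congr rfl fun k _ => by rw [pd_comm (contDiff_pd hf k) k i]
    _ = pd i (fun y => ∑ k, pd k (pd k f) y) x := by
        rw [pd_sum Finset.univ (fun k => pd k (pd k f))
          (fun k _ => cdiff (contDiff_pd (contDiff_pd hf k) k)) i]
    _ = pd i (lap f) x := rfl

/-- Δ(∂_i f) = ∂_i Δf (pointwise, as a sum) -/
lemma lap_pd {f : (Fin D → ℝ) → ℝ} (hf : ContDiff ℝ (⊤ : ℕ∞) f) (i : Fin D)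
    (x : Fin D → ℝ) : ∑ k, pd k (pd k (pd i f)) x = pd i (lap f) x := by
  calc ∑ k, pd k (pd k (pd i f)) x = ∑ k, pd k (pd i (pd k f)) x :=
        Finset.sum_congr rfl fun k _ => by rw [pd_comm hf k i]
    _ = pd i (lap f) x := sum_pd_comm hf i x

/-- Σ_k ∂_k ∂_i ∂_j ξ_k = ∂_i ∂_j (div ξ) -/
lemma sum_pd3 (ξ : Fin D → (Fin D → ℝ) → ℝ) (hξ : ∀ k, ContDiff ℝ (⊤ : ℕ∞) (ξ k))
    (i j : Fin D) (x : Fin D → ℝ) :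
    ∑ k, pd k (pd i (pd j (ξ k))) x = pd i (pd j (fun y => ∑ k, pd k (ξ k) y)) x := by
  rw [pd_pd_sum Finset.univ (fun k => pd k (ξ k)) (fun k _ => contDiff_pd (hξ k) k) i j]
  refine Finset.sum_congr rfl fun k _ => ?_
  rw [pd_comm (contDiff_pd (hξ k) j) k i, pd_comm (hξ k) k j]

end Derived

noncomputable def Gg {D : ℕ} (ξ : Fin D → (Fin D → ℝ) → ℝ) (i j : Fin D) :
    (Fin D → ℝ) → ℝ :=
  fun y => (1/2 : ℝ) * (pd i (ξ j) y + pd j (ξ i) y)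
    - (∑ k, pd k (ξ k) y) * (if i = j then (1 : ℝ) else 0)

section Gauge
variable {D : ℕ} {ξ : Fin D → (Fin D → ℝ) → ℝ}

lemma S_smooth (hξ : ∀ k, ContDiff ℝ (⊤ : ℕ∞) (ξ k)) :
    ContDiff ℝ (⊤ : ℕ∞) (fun y => ∑ k, pd k (ξ k) y) :=
  ContDiff.sum fun k _ => contDiff_pd (hξ k) k

lemma Gg_smooth (hξ : ∀ k, ContDiff ℝ (⊤ : ℕ∞) (ξ k)) (i j : Fin D) :
    ContDiff ℝ (⊤ : ℕ∞) (Gg ξ i j) :=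
  ((contDiff_const.mul ((contDiff_pd (hξ j) i).add (contDiff_pd (hξ i) j))).sub
    ((S_smooth hξ).mul contDiff_const))

lemma pd_pd_G (hξ : ∀ k, ContDiff ℝ (⊤ : ℕ∞) (ξ k)) (a b i j : Fin D) (x : Fin D → ℝ) :
    pd a (pd b (Gg ξ i j)) x
      = (1/2 : ℝ) * (pd a (pd b (pd i (ξ j))) x + pd a (pd b (pd j (ξ i))) x)
        - pd a (pd b (fun y => ∑ k, pd k (ξ k) y)) x * (if i = j then (1 : ℝ) else 0) := by
  have hij : ContDiff ℝ (⊤ : ℕ∞) (fun y => pd i (ξ j) y + pd j (ξ i) y) :=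
    (contDiff_pd (hξ j) i).add (contDiff_pd (hξ i) j)
  have hS : ContDiff ℝ (⊤ : ℕ∞) (fun y => ∑ k, pd k (ξ k) y) := S_smooth hξ
  have h1 : pd b (Gg ξ i j) = fun z =>
      (1/2 : ℝ) * (pd b (pd i (ξ j)) z + pd b (pd j (ξ i)) z)
        - pd b (fun y => ∑ k, pd k (ξ k) y) z * (if i = j then (1 : ℝ) else 0) := by
    funext z
    unfold Gg
    rw [pd_sub (Differentiable.const_mul (cdiff hij) _) ((cdiff hS).mul_const _) b,
      pd_const_mul (cdiff hij) _ b, pd_mul_const (cdiff hS) _ b,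
      pd_add (cdiff (contDiff_pd (hξ j) i)) (cdiff (contDiff_pd (hξ i) j)) b]
  rw [h1]
  have hij' : ContDiff ℝ (⊤ : ℕ∞) (fun z => pd b (pd i (ξ j)) z + pd b (pd j (ξ i)) z) :=
    (contDiff_pd (contDiff_pd (hξ j) i) b).add (contDiff_pd (contDiff_pd (hξ i) j) b)
  have hS' : ContDiff ℝ (⊤ : ℕ∞) (pd b (fun y => ∑ k, pd k (ξ k) y)) := contDiff_pd hS b
  rw [pd_sub (Differentiable.const_mul (cdiff hij') _) ((cdiff hS').mul_const _) a,
    pd_const_mul (cdiff hij') _ a, pd_mul_const (cdiff hS') _ a,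
    pd_add (cdiff (contDiff_pd (contDiff_pd (hξ j) i) b))
      (cdiff (contDiff_pd (contDiff_pd (hξ i) j) b)) a]

end Gauge

section GaugeVals
variable {D : ℕ} {ξ : Fin D → (Fin D → ℝ) → ℝ}

lemma g1 (hξ : ∀ k, ContDiff ℝ (⊤ : ℕ∞) (ξ k)) (i j : Fin D) (x : Fin D → ℝ) :
    lap (Gg ξ i j) x
      = (1/2 : ℝ) * (pd i (lap (ξ j)) x + pd j (lap (ξ i)) x)
        - lap (fun y => ∑ k, pd k (ξ k) y) x * (if i = j then (1 : ℝ) else 0) := by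
  have : lap (Gg ξ i j) x = ∑ k, ((1/2 : ℝ) * (pd k (pd k (pd i (ξ j))) x
      + pd k (pd k (pd j (ξ i))) x)
      - pd k (pd k (fun y => ∑ m, pd m (ξ m) y)) x * (if i = j then (1 : ℝ) else 0)) :=
    Finset.sum_congr rfl fun k _ => pd_pd_G hξ k k i j x
  rw [this, Finset.sum_sub_distrib, ← Finset.mul_sum, ← Finset.sum_mul,
    Finset.sum_add_distrib, lap_pd (hξ j) i x, lap_pd (hξ i) j x]
  rfl

lemma g2 (hξ : ∀ k, ContDiff ℝ (⊤ : ℕ∞) (ξ k)) (i j : Fin D) (x : Fin D → ℝ) :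
    ∑ k, pd k (pd i (Gg ξ j k)) x
      = (1/2 : ℝ) * (pd i (pd j (fun y => ∑ m, pd m (ξ m) y)) x + pd i (lap (ξ j)) x)
        - pd i (pd j (fun y => ∑ m, pd m (ξ m) y)) x := by
  have hS : ContDiff ℝ (⊤ : ℕ∞) (fun y => ∑ m, pd m (ξ m) y) := S_smooth hξ
  have e : ∑ k, pd k (pd i (Gg ξ j k)) x
      = ∑ k, ((1/2 : ℝ) * (pd k (pd i (pd j (ξ k))) x + pd k (pd i (pd k (ξ j))) x)
        - pd k (pd i (fun y => ∑ m, pd m (ξ m) y)) x * (if j = k then (1 : ℝ) else 0)) :=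
    Finset.sum_congr rfl fun k _ => pd_pd_G hξ k i j k x
  rw [e, Finset.sum_sub_distrib, ← Finset.mul_sum, Finset.sum_add_distrib,
    sum_pd3 ξ hξ i j x, sum_pd_comm (hξ j) i x]
  have e2 : ∑ k, pd k (pd i (fun y => ∑ m, pd m (ξ m) y)) x * (if j = k then (1 : ℝ) else 0)
      = pd j (pd i (fun y => ∑ m, pd m (ξ m) y)) x := by
    simp [mul_ite]
  rw [e2, pd_comm hS j i]

lemma g4 (hξ : ∀ k, ContDiff ℝ (⊤ : ℕ∞) (ξ k)) (i j : Fin D) (x : Fin D → ℝ) :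
    pd i (pd j (fun y => ∑ m, Gg ξ m m y)) x
      = (1 - (D : ℝ)) * pd i (pd j (fun y => ∑ m, pd m (ξ m) y)) x := by
  rw [pd_pd_sum' Finset.univ (fun m => Gg ξ m m) (fun m _ => Gg_smooth hξ m m) i j x]
  have e : ∑ m, pd i (pd j (Gg ξ m m)) x
      = ∑ m : Fin D, (pd i (pd j (pd m (ξ m))) x
        - pd i (pd j (fun y => ∑ k, pd k (ξ k) y)) x) := by
    refine Finset.sum_congr rfl fun m _ => ?_
    rw [pd_pd_G hξ i j m m x]
    simp
    ring
  rw [e, Finset.sum_sub_distrib, Finset.sum_const, Finset.card_univ, Fintype.card_fin,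
    ← pd_pd_sum' Finset.univ (fun m => pd m (ξ m)) (fun m _ => contDiff_pd (hξ m) m) i j x]
  ring

lemma g5 (hξ : ∀ k, ContDiff ℝ (⊤ : ℕ∞) (ξ k)) (x : Fin D → ℝ) :
    ∑ k, ∑ p, pd k (pd p (Gg ξ k p)) x = 0 := by
  have hS : ContDiff ℝ (⊤ : ℕ∞) (fun y => ∑ m, pd m (ξ m) y) := S_smooth hξ
  have e : ∀ k : Fin D, ∑ p, pd k (pd p (Gg ξ k p)) x
      = (1/2 : ℝ) * (pd k (pd k (fun y => ∑ m, pd m (ξ m) y)) x + pd k (lap (ξ k)) x)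
        - pd k (pd k (fun y => ∑ m, pd m (ξ m) y)) x := by
    intro k
    have e0 : ∑ p, pd k (pd p (Gg ξ k p)) x
        = ∑ p, ((1/2 : ℝ) * (pd k (pd p (pd k (ξ p))) x + pd k (pd p (pd p (ξ k))) x)
          - pd k (pd p (fun y => ∑ m, pd m (ξ m) y)) x * (if k = p then (1 : ℝ) else 0)) :=
      Finset.sum_congr rfl fun p _ => pd_pd_G hξ k p k p x
    rw [e0, Finset.sum_sub_distrib, ← Finset.mul_sum, Finset.sum_add_distrib]
    have e1 : ∑ p, pd k (pd p (pd k (ξ p))) x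
        = pd k (pd k (fun y => ∑ m, pd m (ξ m) y)) x := by
      rw [pd_pd_sum' Finset.univ (fun p => pd p (ξ p))
        (fun p _ => contDiff_pd (hξ p) p) k k x]
      exact Finset.sum_congr rfl fun p _ => by rw [pd_comm (hξ p) p k]
    have e2 : ∑ p, pd k (pd p (pd p (ξ k))) x = pd k (lap (ξ k)) x :=
      (pd_sum' Finset.univ (fun p => pd p (pd p (ξ k)))
        (fun p _ => cdiff (contDiff_pd (contDiff_pd (hξ k) p) p)) k x).symm
    have e3 : ∑ p, pd k (pd p (fun y => ∑ m, pd m (ξ m) y)) x * (if k = p then (1:ℝ) else 0)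
        = pd k (pd k (fun y => ∑ m, pd m (ξ m) y)) x := by
      simp [mul_ite]
    rw [e1, e2, e3]
  have e4 : ∑ k, pd k (lap (ξ k)) x = lap (fun y => ∑ m, pd m (ξ m) y) x := by
    have : ∀ k : Fin D, pd k (lap (ξ k)) x = ∑ p, pd p (pd p (pd k (ξ k))) x :=
      fun k => (lap_pd (hξ k) k x).symm
    rw [Finset.sum_congr rfl fun k _ => this k, Finset.sum_comm]
    refine Finset.sum_congr rfl fun p _ => ?_
    exact (pd_pd_sum' Finset.univ (fun k => pd k (ξ k)) (fun k _ => contDiff_pd (hξ k) k) p p x).symm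
  have e5 : ∑ k, pd k (pd k (fun y => ∑ m, pd m (ξ m) y)) x
      = lap (fun y => ∑ m, pd m (ξ m) y) x := rfl
  rw [Finset.sum_congr rfl fun k _ => e k, Finset.sum_sub_distrib, ← Finset.mul_sum,
    Finset.sum_add_distrib, e4, e5]
  ring

lemma g6 (hξ : ∀ k, ContDiff ℝ (⊤ : ℕ∞) (ξ k)) (x : Fin D → ℝ) :
    lap (fun y => ∑ m, Gg ξ m m y) x
      = (1 - (D : ℝ)) * lap (fun y => ∑ m, pd m (ξ m) y) x := by
  have : lap (fun y => ∑ m, Gg ξ m m y) x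
      = ∑ k, (1 - (D : ℝ)) * pd k (pd k (fun y => ∑ m, pd m (ξ m) y)) x :=
    Finset.sum_congr rfl fun k _ => g4 hξ k k x
  rw [this, ← Finset.mul_sum]
  rfl

end GaugeVals

lemma lap_add' {D : ℕ} {f g : (Fin D → ℝ) → ℝ} (hf : ContDiff ℝ (⊤ : ℕ∞) f)
    (hg : ContDiff ℝ (⊤ : ℕ∞) g) (x : Fin D → ℝ) :
    lap (fun y => f y + g y) x = lap f x + lap g x := by
  show ∑ k, pd k (pd k (fun y => f y + g y)) x = _
  rw [Finset.sum_congr rfl fun k (_ : k ∈ Finset.univ) => pd_pd_add hf hg k k x,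
    Finset.sum_add_distrib]
  rfl


/-- gauge invariance of formula (16c): replacing R_{ij} by
R_{ij} + ∂_{(i}ξ_{j)} − (∂_k ξ_k) δ_{ij} does not change T_{ij} from formula (16c). -/
theorem stmt_9 (D : ℕ) (hD : 3 ≤ D)
    (Rt : Fin D → Fin D → (Fin D → ℝ) → ℝ)
    (hsmooth : ∀ i j, ContDiff ℝ (⊤ : ℕ∞) (Rt i j))
    (hRsym : ∀ i j x, Rt i j x = Rt j i x)
    (ξ : Fin D → (Fin D → ℝ) → ℝ)
    (hξ : ∀ i, ContDiff ℝ (⊤ : ℕ∞) (ξ i))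
    (Rt' : Fin D → Fin D → (Fin D → ℝ) → ℝ)
    (hRt' : ∀ i j x, Rt' i j x = Rt i j x
      + (1/2 : ℝ) * (pd i (ξ j) x + pd j (ξ i) x)
      - (∑ k, pd k (ξ k) x) * (if i = j then (1 : ℝ) else 0)) :
    ∀ i j x,
      Tform (1 / ((D : ℝ) - 2)) (1 / (((D : ℝ) - 1) * ((D : ℝ) - 2))) Rt' i j x
      = Tform (1 / ((D : ℝ) - 2)) (1 / (((D : ℝ) - 1) * ((D : ℝ) - 2))) Rt i j x := by
  intro i j x
  have hsplit : ∀ i j, Rt' i j = fun y => Rt i j y + Gg ξ i j y := fun i j =>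
    funext fun y => by rw [hRt' i j y]; simp only [Gg]; ring
  have h1 : lap (Rt' i j) x = lap (Rt i j) x + lap (Gg ξ i j) x := by
    rw [hsplit i j]; exact lap_add' (hsmooth i j) (Gg_smooth hξ i j) x
  have h2 : ∀ i' j', ∑ k, pd k (pd i' (Rt' j' k)) x
      = ∑ k, pd k (pd i' (Rt j' k)) x + ∑ k, pd k (pd i' (Gg ξ j' k)) x := by
    intro i' j'
    rw [← Finset.sum_add_distrib]
    refine Finset.sum_congr rfl fun k _ => ?_
    rw [hsplit j' k]
    exact pd_pd_add (hsmooth j' k) (Gg_smooth hξ j' k) k i' x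
  have htr : (fun y => ∑ m, Rt' m m y)
      = fun y => (∑ m, Rt m m y) + (∑ m, Gg ξ m m y) := by
    funext y
    rw [← Finset.sum_add_distrib]
    exact Finset.sum_congr rfl fun m _ => by rw [hsplit m m]
  have h4 : pd i (pd j (fun y => ∑ m, Rt' m m y)) x
      = pd i (pd j (fun y => ∑ m, Rt m m y)) x
        + pd i (pd j (fun y => ∑ m, Gg ξ m m y)) x := by
    rw [htr]
    exact pd_pd_add (ContDiff.sum fun m _ => hsmooth m m)
      (ContDiff.sum fun m _ => Gg_smooth hξ m m) i j x
  have h5 : ∑ k, ∑ p, pd k (pd p (Rt' k p)) x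
      = ∑ k, ∑ p, pd k (pd p (Rt k p)) x + ∑ k, ∑ p, pd k (pd p (Gg ξ k p)) x := by
    rw [← Finset.sum_add_distrib]
    refine Finset.sum_congr rfl fun k _ => ?_
    rw [← Finset.sum_add_distrib]
    refine Finset.sum_congr rfl fun p _ => ?_
    rw [hsplit k p]
    exact pd_pd_add (hsmooth k p) (Gg_smooth hξ k p) k p x
  have h6 : lap (fun y => ∑ m, Rt' m m y) x
      = lap (fun y => ∑ m, Rt m m y) x + lap (fun y => ∑ m, Gg ξ m m y) x := by
    rw [htr]
    exact lap_add' (ContDiff.sum fun m _ => hsmooth m m)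
      (ContDiff.sum fun m _ => Gg_smooth hξ m m) x
  have hD2 : ((D : ℝ) - 2) ≠ 0 := by
    have : (3 : ℝ) ≤ (D : ℝ) := by exact_mod_cast hD
    intro h; nlinarith
  have hD1 : ((D : ℝ) - 1) ≠ 0 := by
    have : (3 : ℝ) ≤ (D : ℝ) := by exact_mod_cast hD
    intro h; nlinarith
  have ha : (1 / ((D : ℝ) - 2))
      = ((D : ℝ) - 1) * (1 / (((D : ℝ) - 1) * ((D : ℝ) - 2))) := by
    field_simp
  simp only [Tform]
  rw [h1, h2 i j, h2 j i, h4, h5, h6, g1 hξ i j x, g2 hξ i j x, g2 hξ j i x,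
    g4 hξ i j x, g5 hξ x, g6 hξ x]
  rw [pd_comm (S_smooth hξ) j i]
  linear_combination (pd i (pd j (fun y => ∑ m, pd m (ξ m) y)) x
    - lap (fun y => ∑ m, pd m (ξ m) y) x * (if i = j then (1 : ℝ) else 0)) * ha
end

section
/- (Proposition 4, case D=2) A smooth symmetric tensor field T^{ij} on ℝ² is transverse-traceless (∂_j T^{ij}=0 and δ_{ij}T^{ij}=0) if and only if there exists a smooth harmonic function R : ℝ² → ℝ (ΔR = 0) such that T^{ij} = ε^{ik} ε^{jp} ∂_k∂_p R (sum over k,p). -/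
/-- Two-dimensional Levi-Civita symbol: ε^{12} = 1 = -ε^{21}, ε^{11} = ε^{22} = 0. -/
def eps2 (i j : Fin 2) : ℝ :=
  if i = 0 ∧ j = 1 then 1 else if i = 1 ∧ j = 0 then -1 else 0

section Helpers

abbrev E2 := Fin 2 → ℝ

open intervalIntegral Metric MeasureTheory

/-- Smoothness of a partial derivative of a smooth function. -/
lemma pd_contDiff {f : E2 → ℝ} (hf : ContDiff ℝ (⊤:ℕ∞) f) (k : Fin 2) :
    ContDiff ℝ (⊤:ℕ∞) (pd k f) := by
  have h1 : ContDiff ℝ (⊤:ℕ∞) (fderiv ℝ f) := hf.fderiv_right (by simp)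
  exact h1.clm_apply contDiff_const

/-- Clairaut: symmetry of second partial derivatives for smooth functions. -/
lemma pd_comm_s10 {f : E2 → ℝ} (hf : ContDiff ℝ (⊤:ℕ∞) f) (k p : Fin 2) (x : E2) :
    pd k (pd p f) x = pd p (pd k f) x := by
  have hd : ∀ y, HasFDerivAt f (fderiv ℝ f y) y :=
    fun y => (hf.differentiable (by simp) y).hasFDerivAt
  have h1 : ContDiff ℝ (⊤:ℕ∞) (fderiv ℝ f) := hf.fderiv_right (by simp)
  have hx : HasFDerivAt (fderiv ℝ f) (fderiv ℝ (fderiv ℝ f) x) x :=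
    (h1.differentiable (by simp) x).hasFDerivAt
  have hsymm := second_derivative_symmetric hd hx (Pi.single k 1) (Pi.single p 1)
  have hk : ∀ (q r : Fin 2) (y : E2), pd q (pd r f) y
      = (fderiv ℝ (fderiv ℝ f) y (Pi.single q 1)) (Pi.single r 1) := by
    intro q r y
    have : pd r f = fun z => (fderiv ℝ f z) (Pi.single r 1) := rfl
    rw [this, pd]
    have hdf : DifferentiableAt ℝ (fderiv ℝ f) y := h1.differentiable (by simp) y
    rw [fderiv_clm_apply hdf (differentiableAt_const _)]
    simp
  rw [hk, hk, hsymm]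

lemma pd_neg (k : Fin 2) (h : E2 → ℝ) :
    pd k (fun x => -(h x)) = fun x => -(pd k h x) := by
  funext y; simp [pd, fderiv_neg]

noncomputable def proj2 (i : Fin 2) : E2 →L[ℝ] ℝ := ContinuousLinearMap.proj i

lemma hasFDerivAt_smul_comp {h : E2 → ℝ} (hh : ContDiff ℝ (⊤:ℕ∞) h) (s : ℝ) (x : E2) :
    HasFDerivAt (fun y => h (s • y)) (s • fderiv ℝ h (s • x)) x := by
  have h1 : HasFDerivAt h (fderiv ℝ h (s • x)) (s • x) :=
    (hh.differentiable (by simp) (s • x)).hasFDerivAt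
  have h2 : HasFDerivAt (fun y : E2 => s • y) (s • ContinuousLinearMap.id ℝ E2) x :=
    (s • ContinuousLinearMap.id ℝ E2).hasFDerivAt
  have := h1.comp x h2
  refine this.congr_fderiv ?_
  ext v
  simp

lemma apply_decomp (L : E2 →L[ℝ] ℝ) (v : E2) :
    L v = v 0 * L (Pi.single 0 1) + v 1 * L (Pi.single 1 1) := by
  have hv : v = v 0 • (Pi.single 0 1 : E2) + v 1 • (Pi.single 1 1 : E2) := by
    funext i; fin_cases i <;> simp [Pi.single_apply]
  conv_lhs => rw [hv]
  rw [map_add, L.map_smul, L.map_smul, smul_eq_mul, smul_eq_mul]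

lemma cross_identity (L M : E2 →L[ℝ] ℝ) (hc : M (Pi.single 0 1) = L (Pi.single 1 1))
    (x v : E2) : x 0 * L v + x 1 * M v = v 0 * L x + v 1 * M x := by
  rw [apply_decomp L v, apply_decomp M v, apply_decomp L x, apply_decomp M x, hc]; ring

/-- Poincaré lemma on ℝ²: a curl-free smooth vector field has a smooth potential. -/
lemma exists_potential {f g : E2 → ℝ} (hf : ContDiff ℝ (⊤:ℕ∞) f) (hg : ContDiff ℝ (⊤:ℕ∞) g)
    (hcurl : ∀ x, pd 0 g x = pd 1 f x) :
    ∃ P : E2 → ℝ, ContDiff ℝ (⊤:ℕ∞) P ∧ (∀ x, pd 0 P x = f x) ∧ (∀ x, pd 1 P x = g x) := by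
  classical
  set F : E2 → ℝ → ℝ := fun x s => x 0 * f (s • x) + x 1 * g (s • x) with hF
  set F' : E2 → ℝ → (E2 →L[ℝ] ℝ) := fun x s =>
    (x 0 • (s • fderiv ℝ f (s • x)) + f (s • x) • proj2 0) +
    (x 1 • (s • fderiv ℝ g (s • x)) + g (s • x) • proj2 1) with hF'
  set P : E2 → ℝ := fun x => ∫ s in (0:ℝ)..1, F x s with hP
  set L : E2 → (E2 →L[ℝ] ℝ) := fun x => f x • proj2 0 + g x • proj2 1 with hL
  have hder : ∀ (s : ℝ) (x : E2), HasFDerivAt (fun y => F y s) (F' x s) x := by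
    intro s x
    have hx0 : HasFDerivAt (fun y : E2 => y 0) (proj2 0) x := (proj2 0).hasFDerivAt
    have hx1 : HasFDerivAt (fun y : E2 => y 1) (proj2 1) x := (proj2 1).hasFDerivAt
    exact (hx0.mul (hasFDerivAt_smul_comp hf s x)).add (hx1.mul (hasFDerivAt_smul_comp hg s x))
  have hcf : Continuous fun p : E2 × ℝ => p.2 • p.1 := continuous_snd.smul continuous_fst
  have hcF : Continuous fun p : E2 × ℝ => F p.1 p.2 := by
    apply Continuous.add
    · exact ((continuous_apply 0).comp continuous_fst).mul ((hf.continuous).comp hcf)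
    · exact ((continuous_apply 1).comp continuous_fst).mul ((hg.continuous).comp hcf)
  have hcF' : Continuous fun p : E2 × ℝ => F' p.1 p.2 := by
    have hdf : Continuous (fderiv ℝ f) := hf.continuous_fderiv (by simp)
    have hdg : Continuous (fderiv ℝ g) := hg.continuous_fderiv (by simp)
    apply Continuous.add <;> apply Continuous.add
    · exact ((continuous_apply 0).comp continuous_fst).smul
        (continuous_snd.smul (hdf.comp hcf))
    · exact ((hf.continuous).comp hcf).smul continuous_const
    · exact ((continuous_apply 1).comp continuous_fst).smul
        (continuous_snd.smul (hdg.comp hcf))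
    · exact ((hg.continuous).comp hcf).smul continuous_const
  have hPder : ∀ x₀ : E2, HasFDerivAt P (L x₀) x₀ := by
    intro x₀
    obtain ⟨C, hC⟩ : ∃ C, ∀ p ∈ (closedBall x₀ 1) ×ˢ (Set.uIcc (0:ℝ) 1),
        ‖F' p.1 p.2‖ ≤ C :=
      ((isCompact_closedBall x₀ 1).prod isCompact_uIcc).exists_bound_of_continuousOn
        hcF'.continuousOn
    have key := intervalIntegral.hasFDerivAt_integral_of_dominated_of_fderiv_le
      (μ := MeasureTheory.volume) (F := F) (F' := F') (x₀ := x₀) (a := 0) (b := 1)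
      (bound := fun _ => C) (ball_mem_nhds x₀ one_pos)
      (Filter.Eventually.of_forall fun x =>
        ((hcF.comp (Continuous.prodMk_right x)).aestronglyMeasurable))
      ((hcF.comp (Continuous.prodMk_right x₀)).intervalIntegrable 0 1)
      ((hcF'.comp (Continuous.prodMk_right x₀)).aestronglyMeasurable)
      (MeasureTheory.ae_of_all _ fun s hs x hx =>
        hC (x, s) ⟨ball_subset_closedBall hx, Set.uIoc_subset_uIcc hs⟩)
      intervalIntegrable_const
      (MeasureTheory.ae_of_all _ fun s _ x _ => hder s x)
    have hInt : IntervalIntegrable (F' x₀) MeasureTheory.volume 0 1 :=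
      (hcF'.comp (Continuous.prodMk_right x₀)).intervalIntegrable 0 1
    have heq : (∫ s in (0:ℝ)..1, F' x₀ s) = L x₀ := by
      apply ContinuousLinearMap.ext
      intro v
      rw [ContinuousLinearMap.intervalIntegral_apply hInt v]
      set φ : ℝ → ℝ := fun s => s * (v 0 * f (s • x₀) + v 1 * g (s • x₀)) with hφ
      have hφder : ∀ s : ℝ, HasDerivAt φ (F' x₀ s v) s := by
        intro s
        have hsx : HasDerivAt (fun t : ℝ => t • x₀) x₀ s := by
          simpa using (hasDerivAt_id s).smul_const x₀
        have h1 : HasDerivAt (fun t : ℝ => f (t • x₀)) (fderiv ℝ f (s • x₀) x₀) s :=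
          ((hf.differentiable (by simp) (s • x₀)).hasFDerivAt).comp_hasDerivAt s hsx
        have h2 : HasDerivAt (fun t : ℝ => g (t • x₀)) (fderiv ℝ g (s • x₀) x₀) s :=
          ((hg.differentiable (by simp) (s • x₀)).hasFDerivAt).comp_hasDerivAt s hsx
        have h3 : HasDerivAt φ
            (1 * (v 0 * f (s • x₀) + v 1 * g (s • x₀)) +
              s * (v 0 * fderiv ℝ f (s • x₀) x₀ + v 1 * fderiv ℝ g (s • x₀) x₀)) s :=
          ((hasDerivAt_id s).mul (((h1.const_mul (v 0))).add (h2.const_mul (v 1))))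
        convert h3 using 1
        have hcross := cross_identity (fderiv ℝ f (s • x₀)) (fderiv ℝ g (s • x₀))
          (hcurl (s • x₀)) x₀ v
        simp only [hF', ContinuousLinearMap.add_apply, ContinuousLinearMap.smul_apply,
          smul_eq_mul, proj2, ContinuousLinearMap.proj_apply]
        linear_combination s * hcross
      have hci : Continuous fun s => F' x₀ s v :=
        ((hcF'.comp (Continuous.prodMk_right x₀))).clm_apply continuous_const
      have := intervalIntegral.integral_eq_sub_of_hasDerivAt
        (fun s _ => hφder s) (hci.intervalIntegrable 0 1)
      rw [this]
      simp only [hφ, hL, ContinuousLinearMap.add_apply, ContinuousLinearMap.smul_apply,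
        smul_eq_mul, proj2, ContinuousLinearMap.proj_apply, one_smul, zero_smul, one_mul]
      ring
    exact heq ▸ key
  have hdiffP : Differentiable ℝ P := fun x => (hPder x).differentiableAt
  have hfP : fderiv ℝ P = L := funext fun x => (hPder x).fderiv
  have hsmoothL : ContDiff ℝ (⊤:ℕ∞) L :=
    (hf.smul contDiff_const).add (hg.smul contDiff_const)
  have hsmoothP : ContDiff ℝ (⊤:ℕ∞) P :=
    contDiff_infty_iff_fderiv.2 ⟨hdiffP, by rw [hfP]; exact hsmoothL⟩
  refine ⟨P, hsmoothP, fun x => ?_, fun x => ?_⟩ <;>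
  · simp only [pd, hfP, hL, ContinuousLinearMap.add_apply, ContinuousLinearMap.smul_apply,
      smul_eq_mul]
    have hp00 : (proj2 0) (Pi.single (0:Fin 2) (1:ℝ)) = 1 := by simp [proj2]
    have hp01 : (proj2 1) (Pi.single (0:Fin 2) (1:ℝ)) = 0 := by
      simp [proj2, Pi.single_apply]
    have hp10 : (proj2 0) (Pi.single (1:Fin 2) (1:ℝ)) = 0 := by
      simp [proj2, Pi.single_apply]
    have hp11 : (proj2 1) (Pi.single (1:Fin 2) (1:ℝ)) = 1 := by simp [proj2]
    simp [hp00, hp01, hp10, hp11]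

end Helpers

/-- Proposition 4, case D = 2: a smooth symmetric tensor field on ℝ² is
transverse-traceless iff T^{ij} = ε^{ik} ε^{jp} ∂_k∂_p R for some smooth harmonic R. -/
theorem stmt_10
    (T : Fin 2 → Fin 2 → (Fin 2 → ℝ) → ℝ)
    (hsmooth : ∀ i j, ContDiff ℝ (⊤ : ℕ∞) (T i j))
    (hsym : ∀ i j x, T i j x = T j i x) :
    ((∀ i x, ∑ j, pd j (T i j) x = 0) ∧ (∀ x, ∑ i, T i i x = 0))
    ↔ ∃ R : (Fin 2 → ℝ) → ℝ, ContDiff ℝ (⊤ : ℕ∞) R ∧ (∀ x, lap R x = 0) ∧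
        ∀ i j x, T i j x = ∑ k, ∑ p, eps2 i k * eps2 j p * pd k (pd p R) x := by
  constructor
  · rintro ⟨htr, htrace⟩
    have ha : ContDiff ℝ (⊤:ℕ∞) (T 0 0) := hsmooth 0 0
    have hb : ContDiff ℝ (⊤:ℕ∞) (T 0 1) := hsmooth 0 1
    have htr0 : ∀ x, pd 0 (T 0 0) x + pd 1 (T 0 1) x = 0 := by
      intro x; have := htr 0 x; simpa [Fin.sum_univ_two] using this
    have htr1 : ∀ x, pd 0 (T 1 0) x + pd 1 (T 1 1) x = 0 := by
      intro x; have := htr 1 x; simpa [Fin.sum_univ_two] using this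
    have hT10 : T 1 0 = T 0 1 := funext fun x => hsym 1 0 x
    have hT11 : T 1 1 = fun x => -(T 0 0 x) := by
      funext x
      have := htrace x
      simp [Fin.sum_univ_two] at this
      linarith
    -- pd 0 (T 0 1) x = pd 1 (T 0 0) x
    have hcurl2 : ∀ x, pd 0 (T 0 1) x = pd 1 (T 0 0) x := by
      intro x
      have h := htr1 x
      rw [hT10, hT11, pd_neg] at h
      simp only at h
      linarith
    -- potential P : pd 0 P = -b, pd 1 P = a
    obtain ⟨P, hPs, hP0, hP1⟩ := exists_potential (f := fun x => -(T 0 1 x)) (g := T 0 0)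
      hb.neg ha (by
        intro x
        rw [pd_neg]
        have := htr0 x; simp; linarith)
    -- potential Q : pd 0 Q = -a, pd 1 Q = -b
    obtain ⟨Q, hQs, hQ0, hQ1⟩ := exists_potential (f := fun x => -(T 0 0 x))
      (g := fun x => -(T 0 1 x)) ha.neg hb.neg (by
        intro x
        rw [pd_neg, pd_neg]
        have := hcurl2 x; simp; linarith)
    -- potential R : pd 0 R = Q, pd 1 R = P
    obtain ⟨R, hRs, hR0, hR1⟩ := exists_potential (f := Q) (g := P) hQs hPs (by
      intro x
      rw [show pd 0 P x = -(T 0 1 x) from hP0 x, show pd 1 Q x = -(T 0 1 x) from hQ1 x])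
    have hR0' : pd 0 R = Q := funext hR0
    have hR1' : pd 1 R = P := funext hR1
    have h00 : ∀ x, pd 0 (pd 0 R) x = -(T 0 0 x) := by intro x; rw [hR0']; exact hQ0 x
    have h11 : ∀ x, pd 1 (pd 1 R) x = T 0 0 x := by intro x; rw [hR1']; exact hP1 x
    have h01 : ∀ x, pd 0 (pd 1 R) x = -(T 0 1 x) := by intro x; rw [hR1']; exact hP0 x
    have h10 : ∀ x, pd 1 (pd 0 R) x = -(T 0 1 x) := by intro x; rw [hR0']; exact hQ1 x
    refine ⟨R, hRs, fun x => ?_, fun i j x => ?_⟩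
    · simp only [lap, Fin.sum_univ_two]
      rw [h00 x, h11 x]; ring
    · fin_cases i <;> fin_cases j <;>
        simp only [Fin.sum_univ_two, eps2, Fin.isValue] <;> norm_num
      · rw [h11 x]
      · rw [h10 x]; ring
      · rw [hsym 1 0 x, h01 x]; ring
      · rw [congrFun hT11 x, h00 x]
  · rintro ⟨R, hRs, hlap, hform⟩
    have hT00 : T 0 0 = fun x => pd 1 (pd 1 R) x := by
      funext x; have := hform 0 0 x
      simpa [Fin.sum_univ_two, eps2] using this
    have hT01 : T 0 1 = fun x => -(pd 1 (pd 0 R) x) := by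
      funext x; have := hform 0 1 x
      simp [Fin.sum_univ_two, eps2] at this
      linarith
    have hT10 : T 1 0 = fun x => -(pd 0 (pd 1 R) x) := by
      funext x; have := hform 1 0 x
      simp [Fin.sum_univ_two, eps2] at this
      linarith
    have hT11 : T 1 1 = fun x => pd 0 (pd 0 R) x := by
      funext x; have := hform 1 1 x
      simpa [Fin.sum_univ_two, eps2] using this
    have hpd0R : ContDiff ℝ (⊤:ℕ∞) (pd 0 R) := pd_contDiff hRs 0
    have hpd1R : ContDiff ℝ (⊤:ℕ∞) (pd 1 R) := pd_contDiff hRs 1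
    have hcomm : pd 1 (pd 0 R) = pd 0 (pd 1 R) := funext fun x => pd_comm_s10 hRs 1 0 x
    constructor
    · intro i x
      rw [Fin.sum_univ_two]
      fin_cases i
      · show pd 0 (T 0 0) x + pd 1 (T 0 1) x = 0
        rw [hT00, hT01, pd_neg]
        show pd 0 (pd 1 (pd 1 R)) x + -(pd 1 (pd 1 (pd 0 R)) x) = 0
        rw [hcomm]
        rw [pd_comm_s10 hpd1R 1 0 x, pd_comm_s10 hpd1R 0 1 x]
        ring
      · show pd 0 (T 1 0) x + pd 1 (T 1 1) x = 0
        rw [hT10, hT11, pd_neg]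
        show -(pd 0 (pd 0 (pd 1 R)) x) + pd 1 (pd 0 (pd 0 R)) x = 0
        rw [pd_comm_s10 hpd0R 1 0 x, hcomm]
        ring
    · intro x
      rw [Fin.sum_univ_two, hT00, hT11]
      have := hlap x
      simp only [lap, Fin.sum_univ_two] at this
      show pd 1 (pd 1 R) x + pd 0 (pd 0 R) x = 0
      linarith
end

section
/- (Proposition 4, case D≥3) Let D ≥ 3 and let R^{pk} be a smooth symmetric tensor field on ℝ^D. Then ∂_k∂_p R^{pk} = 0 if and only if there exists a smooth tensor field S^{pkr} on ℝ^D, antisymmetric in its last two indices (S^{pkr} = −S^{prk}), such that R^{pk} = ∂_r S^{(pk)r} (sum over r), where S^{(pk)r} = (1/2)(S^{pkr} + S^{kpr}). -/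
open MeasureTheory Function intervalIntegral
open scoped ContDiff

namespace Stmt12

variable {D : ℕ}

lemma one_le_inf : (1 : WithTop ℕ∞) ≤ ∞ := by exact_mod_cast le_top

lemma dOf {F : Type*} [NormedAddCommGroup F] [NormedSpace ℝ F]
    {f : (Fin D → ℝ) → F} (hf : ContDiff ℝ ∞ f) : Differentiable ℝ f :=
  hf.differentiable (by simp)

noncomputable def updCLM (j : Fin D) : (Fin D → ℝ) →L[ℝ] (Fin D → ℝ) :=
  ContinuousLinearMap.pi fun i => if i = j then 0 else ContinuousLinearMap.proj i

@[simp] lemma updCLM_apply (j : Fin D) (x : Fin D → ℝ) :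
    updCLM j x = Function.update x j 0 := by
  funext i
  by_cases h : i = j <;> simp [updCLM, h, Function.update_apply]

lemma update_eq_affine (x : Fin D → ℝ) (j : Fin D) (t : ℝ) :
    Function.update x j t = updCLM j x + t • (Pi.single j 1 : Fin D → ℝ) := by
  funext i
  by_cases h : i = j <;> simp [h, Function.update_apply, Pi.single_apply]

lemma sm_pd {f : (Fin D → ℝ) → ℝ} (hf : ContDiff ℝ ∞ f) (k : Fin D) :
    ContDiff ℝ ∞ (pd k f) := by
  have h1 : ContDiff ℝ ∞ (fderiv ℝ f) := (contDiff_infty_iff_fderiv.mp hf).2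
  exact (ContinuousLinearMap.apply ℝ ℝ (Pi.single k 1)).contDiff.comp h1

lemma pd_add {f g : (Fin D → ℝ) → ℝ} (hf : ContDiff ℝ ∞ f) (hg : ContDiff ℝ ∞ g)
    (k : Fin D) (x : Fin D → ℝ) :
    pd k (fun y => f y + g y) x = pd k f x + pd k g x := by
  unfold pd
  rw [fderiv_fun_add (dOf hf x) (dOf hg x)]
  rfl

lemma pd_neg {f : (Fin D → ℝ) → ℝ} (k : Fin D) (x : Fin D → ℝ) :
    pd k (fun y => -f y) x = - pd k f x := by
  unfold pd
  rw [fderiv_fun_neg]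
  rfl

lemma pd_sub {f g : (Fin D → ℝ) → ℝ} (hf : ContDiff ℝ ∞ f) (hg : ContDiff ℝ ∞ g)
    (k : Fin D) (x : Fin D → ℝ) :
    pd k (fun y => f y - g y) x = pd k f x - pd k g x := by
  unfold pd
  rw [fderiv_fun_sub (dOf hf x) (dOf hg x)]
  rfl

lemma pd_const_mul {f : (Fin D → ℝ) → ℝ} (hf : ContDiff ℝ ∞ f) (c : ℝ)
    (k : Fin D) (x : Fin D → ℝ) :
    pd k (fun y => c * f y) x = c * pd k f x := by
  unfold pd
  rw [fderiv_const_mul (dOf hf x)]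
  rfl

lemma pd_zero (k : Fin D) (x : Fin D → ℝ) : pd k (fun _ => (0:ℝ)) x = 0 := by
  unfold pd
  rw [fderiv_fun_const]
  rfl

lemma pd_sum {ι : Type*} (s : Finset ι) (f : ι → (Fin D → ℝ) → ℝ)
    (hf : ∀ i, ContDiff ℝ ∞ (f i)) (k : Fin D) (x : Fin D → ℝ) :
    pd k (fun y => ∑ i ∈ s, f i y) x = ∑ i ∈ s, pd k (f i) x := by
  unfold pd
  rw [fderiv_fun_sum (fun i _ => (dOf (hf i) x))]
  simp

lemma pd_comm {f : (Fin D → ℝ) → ℝ} (hf : ContDiff ℝ ∞ f) (a b : Fin D) (x : Fin D → ℝ) :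
    pd a (pd b f) x = pd b (pd a f) x := by
  have hd : ∀ y, HasFDerivAt f (fderiv ℝ f y) y := fun y => ((dOf hf) y).hasFDerivAt
  have hdf : DifferentiableAt ℝ (fderiv ℝ f) x :=
    (dOf (contDiff_infty_iff_fderiv.mp hf).2) x
  have hsymm := second_derivative_symmetric hd hdf.hasFDerivAt
  have h1 : ∀ v : Fin D → ℝ, fderiv ℝ (fun y => fderiv ℝ f y v) x
      = (fderiv ℝ (fderiv ℝ f) x).flip v := by
    intro v
    have := fderiv_clm_apply (c := fderiv ℝ f) (u := fun _ => v) hdf (differentiableAt_const v)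
    simpa using this
  show fderiv ℝ (fun y => fderiv ℝ f y (Pi.single b 1)) x (Pi.single a 1)
      = fderiv ℝ (fun y => fderiv ℝ f y (Pi.single a 1)) x (Pi.single b 1)
  rw [h1, h1]
  exact hsymm _ _


noncomputable def prim (j : Fin D) (f : (Fin D → ℝ) → ℝ) : (Fin D → ℝ) → ℝ :=
  fun x => ∫ t in (0:ℝ)..(x j), f (Function.update x j t)

noncomputable def primD (j : Fin D) (f : (Fin D → ℝ) → ℝ) (x : Fin D → ℝ) :
    (Fin D → ℝ) →L[ℝ] ℝ :=
  f x • ContinuousLinearMap.proj j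
    + ∫ t in (0:ℝ)..(x j), ((fderiv ℝ f (Function.update x j t)).comp (updCLM j))

lemma cont_upd (j : Fin D) (x : Fin D → ℝ) :
    Continuous fun t : ℝ => Function.update x j t :=
  continuous_const.update j continuous_id

lemma hasFDerivAt_update (j : Fin D) {f : (Fin D → ℝ) → ℝ} (hf : ContDiff ℝ ∞ f)
    (t : ℝ) (y : Fin D → ℝ) :
    HasFDerivAt (fun z => f (Function.update z j t))
      ((fderiv ℝ f (Function.update y j t)).comp (updCLM j)) y := by
  have h0 : HasFDerivAt (fun z : Fin D → ℝ => Function.update z j t) (updCLM j) y := by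
    have he : (fun z : Fin D → ℝ => Function.update z j t)
        = fun z => updCLM j z + t • (Pi.single j 1 : Fin D → ℝ) :=
      funext fun z => update_eq_affine z j t
    rw [he]
    exact (updCLM j).hasFDerivAt.add_const _
  exact (dOf hf _).hasFDerivAt.comp y h0

lemma intervalIntegrable_comp (j : Fin D) {f : (Fin D → ℝ) → ℝ} (hf : Continuous f)
    (x : Fin D → ℝ) (a b : ℝ) :
    IntervalIntegrable (fun t => f (Function.update x j t)) volume a b :=
  (hf.comp (cont_upd j x)).intervalIntegrable a b

lemma cont_fderiv_comp (j : Fin D) {f : (Fin D → ℝ) → ℝ} (hf : ContDiff ℝ ∞ f)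
    (x : Fin D → ℝ) :
    Continuous fun t : ℝ => (fderiv ℝ f (Function.update x j t)).comp (updCLM j) :=
  Continuous.clm_comp ((hf.continuous_fderiv (by simp)).comp (cont_upd j x)) continuous_const

lemma norm_update_le (y : Fin D → ℝ) (j : Fin D) (t : ℝ) :
    ‖Function.update y j t‖ ≤ ‖y‖ + |t| := by
  have h0 : (0:ℝ) ≤ ‖y‖ + |t| := by positivity
  apply (pi_norm_le_iff_of_nonneg h0).2
  intro i
  by_cases h : i = j
  · subst h; simp [Function.update_apply, Real.norm_eq_abs]
  · rw [Function.update_apply, if_neg h]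
    calc ‖y i‖ ≤ ‖y‖ := norm_le_pi_norm y i
      _ ≤ ‖y‖ + |t| := le_add_of_nonneg_right (abs_nonneg t)

lemma abs_sub_le_of_mem_uIoc {t a b : ℝ} (ht : t ∈ Set.uIoc a b) : |t - a| ≤ |b - a| := by
  rcases ht with ⟨h1, h2⟩
  rcases le_total a b with h | h
  · rw [min_eq_left h] at h1; rw [max_eq_right h] at h2
    rw [abs_le]
    constructor <;> nlinarith [neg_abs_le (b - a), le_abs_self (b - a), abs_nonneg (b - a)]
  · rw [min_eq_right h] at h1; rw [max_eq_left h] at h2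
    rw [abs_le]
    constructor <;> nlinarith [neg_abs_le (b - a), le_abs_self (b - a), abs_nonneg (b - a)]

lemma abs_le_of_mem_uIoc {t c : ℝ} (ht : t ∈ Set.uIoc 0 c) : |t| ≤ |c| := by
  have := abs_sub_le_of_mem_uIoc ht
  simpa using this

lemma prim_hasFDerivAt (j : Fin D) {f : (Fin D → ℝ) → ℝ} (hf : ContDiff ℝ ∞ f)
    (x : Fin D → ℝ) :
    HasFDerivAt (prim j f) (primD j f x) x := by
  set c : ℝ := x j with hc
  have hfc : Continuous f := hf.continuous
  have hsplit : prim j f = fun y => (∫ t in c..(y j), f (Function.update y j t))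
      + (∫ t in (0:ℝ)..c, f (Function.update y j t)) := by
    funext y
    rw [add_comm, intervalIntegral.integral_add_adjacent_intervals
      (intervalIntegrable_comp j hfc y 0 c) (intervalIntegrable_comp j hfc y c (y j))]
    rfl
  have H1 : HasFDerivAt (fun y => ∫ t in (0:ℝ)..c, f (Function.update y j t))
      (∫ t in (0:ℝ)..c, (fderiv ℝ f (Function.update x j t)).comp (updCLM j)) x := by
    set r : ℝ := ‖x‖ + 1 + |c| with hr
    obtain ⟨M₀, hM₀⟩ := (isCompact_closedBall (0 : Fin D → ℝ) r).exists_bound_of_continuousOn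
      (hf.continuous_fderiv (by simp)).continuousOn
    apply intervalIntegral.hasFDerivAt_integral_of_dominated_of_fderiv_le
      (F := fun y t => f (Function.update y j t))
      (F' := fun y t => (fderiv ℝ f (Function.update y j t)).comp (updCLM j))
      (bound := fun _ => M₀ * ‖updCLM (D := D) j‖) (Metric.ball_mem_nhds x one_pos)
    · exact Filter.Eventually.of_forall fun y =>
        ((hfc.comp (cont_upd j y)).aestronglyMeasurable).restrict
    · exact intervalIntegrable_comp j hfc x 0 c
    · exact ((cont_fderiv_comp j hf x).aestronglyMeasurable).restrict
    · apply Filter.Eventually.of_forall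
      intro t ht y hy
      have hmem : Function.update y j t ∈ Metric.closedBall (0 : Fin D → ℝ) r := by
        rw [Metric.mem_closedBall, dist_zero_right]
        have h1 : ‖y‖ ≤ ‖x‖ + 1 := by
          have := mem_ball_iff_norm.mp hy
          calc ‖y‖ = ‖x + (y - x)‖ := by ring_nf
            _ ≤ ‖x‖ + ‖y - x‖ := norm_add_le _ _
            _ ≤ ‖x‖ + 1 := by linarith
        calc ‖Function.update y j t‖ ≤ ‖y‖ + |t| := norm_update_le y j t
          _ ≤ (‖x‖ + 1) + |c| := add_le_add h1 (abs_le_of_mem_uIoc ht)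
      calc ‖(fderiv ℝ f (Function.update y j t)).comp (updCLM j)‖
          ≤ ‖fderiv ℝ f (Function.update y j t)‖ * ‖updCLM (D := D) j‖ :=
            ContinuousLinearMap.opNorm_comp_le _ _
        _ ≤ M₀ * ‖updCLM (D := D) j‖ :=
            mul_le_mul_of_nonneg_right (hM₀ _ hmem) (norm_nonneg _)
    · exact intervalIntegrable_const
    · exact Filter.Eventually.of_forall fun t _ y _ => hasFDerivAt_update j hf t y
  have H2 : HasFDerivAt (fun y => ∫ t in c..(y j), f (Function.update y j t))
      (f x • (ContinuousLinearMap.proj j : (Fin D → ℝ) →L[ℝ] ℝ)) x := by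
    rw [hasFDerivAt_iff_isLittleO_nhds_zero]
    rw [Asymptotics.isLittleO_iff]
    intro ε hε
    have hcont : Continuous fun p : (Fin D → ℝ) × ℝ => f (Function.update p.1 j p.2) :=
      hfc.comp (continuous_fst.update j continuous_snd)
    have hcx : Function.update x j c = x := Function.update_eq_self j x
    obtain ⟨δ, hδ0, hδ⟩ := Metric.continuousAt_iff.mp hcont.continuousAt ε hε
    rw [Metric.eventually_nhds_iff]
    refine ⟨δ, hδ0, ?_⟩
    intro h hh
    set y : Fin D → ℝ := x + h with hy
    have hyx : ‖y - x‖ < δ := by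
      have : y - x = h := by rw [hy]; abel
      rw [this]
      rwa [dist_zero_right] at hh
    have hyj : y j - c = h j := by simp [hy, hc]
    have hjx : |y j - c| ≤ ‖y - x‖ := by
      have := norm_le_pi_norm (y - x) j
      simpa [Real.norm_eq_abs, hc] using this
    have hbound : ∀ t ∈ Set.uIoc c (y j),
        ‖f (Function.update y j t) - f x‖ ≤ ε := by
      intro t ht
      have htc : |t - c| ≤ |y j - c| := by
        have := abs_sub_le_of_mem_uIoc ht
        simpa using this
      have hd : dist (y, t) (x, c) < δ := by
        rw [Prod.dist_eq]
        apply max_lt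
        · rwa [dist_eq_norm]
        · rw [Real.dist_eq]
          calc |t - c| ≤ |y j - c| := htc
            _ ≤ ‖y - x‖ := hjx
            _ < δ := hyx
      have := hδ hd
      rw [hcx] at this
      exact le_of_lt this
    have hint1 : IntervalIntegrable (fun t => f (Function.update y j t)) volume c (y j) :=
      intervalIntegrable_comp j hfc y c (y j)
    have heq : (∫ t in c..(y j), f (Function.update y j t)) - 0 - f x * h j
        = ∫ t in c..(y j), (f (Function.update y j t) - f x) := by
      rw [intervalIntegral.integral_sub hint1 intervalIntegrable_const,
        intervalIntegral.integral_const]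
      rw [← hyj]
      simp [smul_eq_mul]
      ring
    have hB : (∫ t in c..c, f (Function.update x j t)) = 0 :=
      intervalIntegral.integral_same
    have hnh : ‖h‖ = ‖y - x‖ := by
      congr 1
      rw [hy]; abel
    simp only [ContinuousLinearMap.smul_apply, ContinuousLinearMap.proj_apply,
      smul_eq_mul]
    show ‖(∫ t in c..((x + h) j), f (Function.update (x + h) j t)) -
        (∫ t in c..c, f (Function.update x j t)) - f x * h j‖ ≤ ε * ‖h‖
    rw [hB, ← hy, heq, hnh]
    calc ‖∫ t in c..(y j), (f (Function.update y j t) - f x)‖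
        ≤ ε * |y j - c| := intervalIntegral.norm_integral_le_of_norm_le_const hbound
      _ ≤ ε * ‖y - x‖ := mul_le_mul_of_nonneg_left hjx (le_of_lt hε)
  rw [hsplit]
  exact H2.add H1

lemma updCLM_single_self (j : Fin D) :
    updCLM j (Pi.single j 1 : Fin D → ℝ) = 0 := by
  rw [updCLM_apply]
  funext i
  by_cases h : i = j <;> simp [Function.update_apply, h, Pi.single_apply]

lemma updCLM_single_other {j r : Fin D} (h : r ≠ j) :
    updCLM j (Pi.single r 1 : Fin D → ℝ) = Pi.single r 1 := by
  rw [updCLM_apply]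
  funext i
  by_cases hij : i = j
  · subst hij
    rw [Function.update_apply, if_pos rfl, Pi.single_apply, if_neg (Ne.symm h)]
  · simp [Function.update_apply, hij]

lemma intervalIntegrable_primD (j : Fin D) {f : (Fin D → ℝ) → ℝ} (hf : ContDiff ℝ ∞ f)
    (x : Fin D → ℝ) :
    IntervalIntegrable (fun t => (fderiv ℝ f (Function.update x j t)).comp (updCLM j))
      volume 0 (x j) :=
  (cont_fderiv_comp j hf x).intervalIntegrable _ _

lemma fderiv_prim (j : Fin D) {f : (Fin D → ℝ) → ℝ} (hf : ContDiff ℝ ∞ f)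
    (x : Fin D → ℝ) : fderiv ℝ (prim j f) x = primD j f x :=
  (prim_hasFDerivAt j hf x).fderiv

lemma pd_prim_self (j : Fin D) {f : (Fin D → ℝ) → ℝ} (hf : ContDiff ℝ ∞ f)
    (x : Fin D → ℝ) : pd j (prim j f) x = f x := by
  show fderiv ℝ (prim j f) x (Pi.single j 1) = f x
  rw [fderiv_prim j hf x]
  rw [primD]
  rw [ContinuousLinearMap.add_apply, ContinuousLinearMap.smul_apply,
    ContinuousLinearMap.proj_apply,
    ContinuousLinearMap.intervalIntegral_apply (intervalIntegrable_primD j hf x)]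
  simp only [ContinuousLinearMap.comp_apply, updCLM_single_self, map_zero]
  simp [Pi.single_apply]

lemma pd_prim_other {j r : Fin D} (h : r ≠ j) {f : (Fin D → ℝ) → ℝ}
    (hf : ContDiff ℝ ∞ f) (x : Fin D → ℝ) :
    pd r (prim j f) x = prim j (pd r f) x := by
  show fderiv ℝ (prim j f) x (Pi.single r 1) = prim j (pd r f) x
  rw [fderiv_prim j hf x]
  rw [primD]
  rw [ContinuousLinearMap.add_apply, ContinuousLinearMap.smul_apply,
    ContinuousLinearMap.proj_apply,
    ContinuousLinearMap.intervalIntegral_apply (intervalIntegrable_primD j hf x)]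
  simp only [ContinuousLinearMap.comp_apply, updCLM_single_other h]
  rw [Pi.single_apply, if_neg (Ne.symm h)]
  simp only [smul_eq_mul, mul_zero, zero_add]
  rfl

lemma single_decomp (j : Fin D) (y : Fin D → ℝ) :
    updCLM j y = ∑ r ∈ Finset.univ.erase j, y r • (Pi.single r 1 : Fin D → ℝ) := by
  rw [updCLM_apply]
  funext i
  rw [Finset.sum_apply]
  simp only [Pi.smul_apply, Pi.single_apply, smul_eq_mul, mul_ite, mul_one, mul_zero]
  rw [Finset.sum_ite_eq]
  by_cases h : i = j <;> simp [Function.update_apply, h]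

lemma primD_apply_eq (j : Fin D) {f : (Fin D → ℝ) → ℝ} (hf : ContDiff ℝ ∞ f)
    (x y : Fin D → ℝ) :
    primD j f x y = f x * y j
      + ∑ r ∈ Finset.univ.erase j, y r * prim j (pd r f) x := by
  have hsum : ∀ t : ℝ, ((fderiv ℝ f (Function.update x j t)).comp (updCLM j)) y
      = ∑ r ∈ Finset.univ.erase j, y r * pd r f (Function.update x j t) := by
    intro t
    rw [ContinuousLinearMap.comp_apply, single_decomp j y, map_sum]
    refine Finset.sum_congr rfl fun r _ => ?_
    rw [(fderiv ℝ f (Function.update x j t)).map_smul]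
    rfl
  rw [primD, ContinuousLinearMap.add_apply, ContinuousLinearMap.smul_apply,
    ContinuousLinearMap.proj_apply,
    ContinuousLinearMap.intervalIntegral_apply (intervalIntegrable_primD j hf x)]
  rw [show (∫ t in (0:ℝ)..(x j), ((fderiv ℝ f (Function.update x j t)).comp (updCLM j)) y)
      = ∫ t in (0:ℝ)..(x j), ∑ r ∈ Finset.univ.erase j,
        y r * pd r f (Function.update x j t) from
    intervalIntegral.integral_congr (fun t _ => hsum t)]
  have hintg : ∀ r ∈ Finset.univ.erase j,
      IntervalIntegrable (fun t => y r * pd r f (Function.update x j t)) volume 0 (x j) :=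
    fun r _ =>
      (continuous_const.mul (((sm_pd hf r).continuous).comp (cont_upd j x))).intervalIntegrable _ _
  rw [intervalIntegral.integral_finset_sum hintg]
  have hterm : ∀ r ∈ Finset.univ.erase j,
      (∫ t in (0:ℝ)..(x j), y r * pd r f (Function.update x j t))
        = y r * prim j (pd r f) x := by
    intro r _
    rw [intervalIntegral.integral_const_mul]
    rfl
  rw [Finset.sum_congr rfl hterm]
  simp [smul_eq_mul]

lemma sm_prim (j : Fin D) {f : (Fin D → ℝ) → ℝ} (hf : ContDiff ℝ ∞ f) :
    ContDiff ℝ ∞ (prim j f) := by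
  suffices H : ∀ (n : ℕ) (f : (Fin D → ℝ) → ℝ), ContDiff ℝ ∞ f
      → ContDiff ℝ (n : ℕ) (prim j f) by
    exact contDiff_infty.mpr fun n => H n f hf
  intro n
  induction n with
  | zero =>
    intro f hf
    rw [show ((0:ℕ) : WithTop ℕ∞) = 0 from rfl, contDiff_zero]
    exact Differentiable.continuous fun x => (prim_hasFDerivAt j hf x).differentiableAt
  | succ n ih =>
    intro f hf
    have hcast : ((n + 1 : ℕ) : WithTop ℕ∞) = (n : WithTop ℕ∞) + 1 := by push_cast; ring
    rw [hcast, contDiff_succ_iff_fderiv_apply]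
    refine ⟨fun x => (prim_hasFDerivAt j hf x).differentiableAt, ?_, ?_⟩
    · intro hn
      exact absurd hn (by simp)
    · intro y
      have hfd : (fun x => fderiv ℝ (prim j f) x y)
          = fun x => f x * y j + ∑ r ∈ Finset.univ.erase j, y r * prim j (pd r f) x := by
        funext x
        rw [fderiv_prim j hf x, primD_apply_eq j hf x y]
      rw [hfd]
      have h1 : ContDiff ℝ (n : ℕ) fun x : Fin D → ℝ => f x * y j :=
        (contDiff_infty.mp hf n).mul contDiff_const
      exact h1.add (ContDiff.sum fun r _ => contDiff_const.mul (ih _ (sm_pd hf r)))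

lemma prim_pd_self (j : Fin D) {f : (Fin D → ℝ) → ℝ} (hf : ContDiff ℝ ∞ f)
    (x : Fin D → ℝ) :
    prim j (pd j f) x = f x - f (Function.update x j 0) := by
  have hder : ∀ t : ℝ, HasDerivAt (fun t => f (Function.update x j t))
      (pd j f (Function.update x j t)) t := by
    intro t
    have h0 : HasDerivAt (fun t : ℝ => Function.update x j t)
        (Pi.single j 1 : Fin D → ℝ) t := by
      have he : (fun t : ℝ => Function.update x j t)
          = fun t => updCLM j x + t • (Pi.single j 1 : Fin D → ℝ) :=
        funext fun t => update_eq_affine x j t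
      rw [he]
      simpa using ((hasDerivAt_id t).smul_const (Pi.single j 1 : Fin D → ℝ)).const_add (updCLM j x)
    have := ((dOf hf _).hasFDerivAt).comp_hasDerivAt t h0
    exact this
  have := intervalIntegral.integral_eq_sub_of_hasDerivAt
    (f := fun t => f (Function.update x j t)) (a := (0:ℝ)) (b := x j)
    (fun t _ => hder t)
    (((sm_pd hf j).continuous.comp (cont_upd j x)).intervalIntegrable _ _)
  show (∫ t in (0:ℝ)..(x j), pd j f (Function.update x j t)) = _
  rw [this]
  simp

lemma prim_sum {ι : Type*} (j : Fin D) (s : Finset ι) (f : ι → (Fin D → ℝ) → ℝ)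
    (hf : ∀ i, Continuous (f i)) (x : Fin D → ℝ) :
    prim j (fun y => ∑ i ∈ s, f i y) x = ∑ i ∈ s, prim j (f i) x := by
  show (∫ t in (0:ℝ)..(x j), ∑ i ∈ s, f i (Function.update x j t)) = _
  have hintg : ∀ i ∈ s,
      IntervalIntegrable (fun t => f i (Function.update x j t)) volume 0 (x j) :=
    fun i _ => ((hf i).comp (cont_upd j x)).intervalIntegrable _ _
  rw [intervalIntegral.integral_finset_sum hintg]
  rfl

lemma prim_neg (j : Fin D) (f : (Fin D → ℝ) → ℝ) (x : Fin D → ℝ) :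
    prim j (fun y => -f y) x = - prim j f x := by
  show (∫ t in (0:ℝ)..(x j), -f (Function.update x j t)) = _
  rw [intervalIntegral.integral_neg]
  rfl

lemma prim_congr (j : Fin D) {f g : (Fin D → ℝ) → ℝ} (h : ∀ y, f y = g y)
    (x : Fin D → ℝ) : prim j f x = prim j g x := by
  have : f = g := funext h
  rw [this]

lemma prim_zero (j : Fin D) (x : Fin D → ℝ) : prim j (fun _ => (0:ℝ)) x = 0 := by
  show (∫ _ in (0:ℝ)..(x j), (0:ℝ)) = 0
  simp

lemma pd_congr {f g : (Fin D → ℝ) → ℝ} (h : ∀ y, f y = g y) (k : Fin D) (x : Fin D → ℝ) :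
    pd k f x = pd k g x := by
  rw [show f = g from funext h]

lemma sm_comp_upd (j : Fin D) {f : (Fin D → ℝ) → ℝ} (hf : ContDiff ℝ ∞ f) :
    ContDiff ℝ ∞ (fun y => f (updCLM j y)) :=
  hf.comp (updCLM j).contDiff

lemma pd_comp_upd (j r : Fin D) {f : (Fin D → ℝ) → ℝ} (hf : ContDiff ℝ ∞ f)
    (x : Fin D → ℝ) :
    pd r (fun y => f (updCLM j y)) x
      = if r = j then 0 else pd r f (updCLM j x) := by
  have hC : HasFDerivAt (fun y => f (updCLM j y))
      ((fderiv ℝ f (updCLM j x)).comp (updCLM j)) x :=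
    (dOf hf _).hasFDerivAt.comp x (updCLM j).hasFDerivAt
  show fderiv ℝ (fun y => f (updCLM j y)) x (Pi.single r 1) = _
  rw [hC.fderiv, ContinuousLinearMap.comp_apply]
  by_cases h : r = j
  · subst h; rw [updCLM_single_self, map_zero, if_pos rfl]
  · rw [updCLM_single_other h, if_neg h]
    rfl

lemma sum_delta {M : Type*} [AddCommMonoid M] (b : Fin D) (f : Fin D → M) :
    ∑ r, (if r = b then f r else 0) = f b := by
  simp

lemma sum_pd_prim (i0 : Fin D) (v : Fin D → (Fin D → ℝ) → ℝ)
    (hv : ∀ k, ContDiff ℝ ∞ (v k))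
    (hdiv : ∀ x, ∑ k, pd k (v k) x = 0) (x : Fin D → ℝ) :
    ∑ r, pd r (prim i0 (v r)) x = v i0 (updCLM i0 x) := by
  rw [← Finset.add_sum_erase _ _ (Finset.mem_univ i0)]
  rw [pd_prim_self i0 (hv i0) x]
  have h1 : ∀ r ∈ Finset.univ.erase i0,
      pd r (prim i0 (v r)) x = prim i0 (pd r (v r)) x := fun r hr =>
    pd_prim_other (Finset.ne_of_mem_erase hr) (hv r) x
  rw [Finset.sum_congr rfl h1]
  have h2 : ∑ r ∈ Finset.univ.erase i0, prim i0 (pd r (v r)) x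
      = prim i0 (fun y => ∑ r ∈ Finset.univ.erase i0, pd r (v r) y) x :=
    (prim_sum i0 _ _ (fun r => (sm_pd (hv r) r).continuous) x).symm
  rw [h2]
  have h3 : ∀ y, (∑ r ∈ Finset.univ.erase i0, pd r (v r) y) = - pd i0 (v i0) y := by
    intro y
    have := hdiv y
    rw [← Finset.add_sum_erase _ _ (Finset.mem_univ i0)] at this
    linarith
  rw [prim_congr i0 h3 x, prim_neg, prim_pd_self i0 (hv i0) x]
  rw [updCLM_apply]
  ring

lemma divfree_potential (i0 i1 : Fin D) (h01 : i0 ≠ i1)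
    (v : Fin D → (Fin D → ℝ) → ℝ) (hv : ∀ k, ContDiff ℝ ∞ (v k))
    (hdiv : ∀ x, ∑ k, pd k (v k) x = 0) :
    ∃ A : Fin D → Fin D → (Fin D → ℝ) → ℝ,
      (∀ k r, ContDiff ℝ ∞ (A k r)) ∧
      (∀ k r x, A k r x = - A r k x) ∧
      (∀ k x, ∑ r, pd r (A k r) x = v k x) := by
  set g : (Fin D → ℝ) → ℝ := fun y => v i0 (updCLM i0 y) with hg
  have hgsm : ContDiff ℝ ∞ g := sm_comp_upd i0 (hv i0)
  have hpdg : ∀ y, pd i0 g y = 0 := by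
    intro y
    rw [hg, pd_comp_upd i0 i0 (hv i0) y, if_pos rfl]
  set M : Fin D → Fin D → (Fin D → ℝ) → ℝ := fun k r =>
    (if r = i0 then prim i0 (v k) else 0)
      + (if k = i0 ∧ r = i1 then prim i1 g else 0) with hM
  have hMsm : ∀ k r, ContDiff ℝ ∞ (M k r) := by
    intro k r
    apply ContDiff.add <;> split_ifs <;>
      first
        | exact sm_prim _ (hv _)
        | exact sm_prim _ hgsm
        | exact contDiff_const
  have hpdM : ∀ (k r s : Fin D) (x : Fin D → ℝ), pd s (M k r) x
      = (if r = i0 then pd s (prim i0 (v k)) x else 0)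
        + (if k = i0 ∧ r = i1 then pd s (prim i1 g) x else 0) := by
    intro k r s x
    have hF : ContDiff ℝ ∞ (if r = i0 then prim i0 (v k) else 0) := by
      split_ifs
      · exact sm_prim _ (hv k)
      · exact contDiff_const
    have hG : ContDiff ℝ ∞ (if k = i0 ∧ r = i1 then prim i1 g else 0) := by
      split_ifs
      · exact sm_prim _ hgsm
      · exact contDiff_const
    have h2 : pd s (M k r) x
        = pd s (if r = i0 then prim i0 (v k) else 0) x
          + pd s (if k = i0 ∧ r = i1 then prim i1 g else 0) x := pd_add hF hG s x
    rw [h2]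
    congr 1
    · split_ifs with h
      · rfl
      · exact pd_zero s x
    · split_ifs with h
      · rfl
      · exact pd_zero s x
  refine ⟨fun k r => fun x => M k r x - M r k x, ?_, ?_, ?_⟩
  · intro k r; exact (hMsm k r).sub (hMsm r k)
  · intro k r x; ring
  · intro k x
    have hsplit : ∑ r, pd r (fun y => M k r y - M r k y) x
        = (∑ r, pd r (M k r) x) - ∑ r, pd r (M r k) x := by
      rw [← Finset.sum_sub_distrib]
      exact Finset.sum_congr rfl fun r _ => pd_sub (hMsm k r) (hMsm r k) r x
    rw [hsplit]
    have hS1 : ∑ r, pd r (M k r) x = v k x + (if k = i0 then g x else 0) := by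
      rw [Finset.sum_congr rfl (fun r _ => hpdM k r r x), Finset.sum_add_distrib]
      congr 1
      · rw [sum_delta i0 (fun r => pd r (prim i0 (v k)) x)]
        exact pd_prim_self i0 (hv k) x
      · by_cases hk : k = i0
        · simp only [hk, eq_self_iff_true, true_and, if_true]
          rw [sum_delta i1 (fun r => pd r (prim i1 g) x)]
          exact pd_prim_self i1 hgsm x
        · simp [hk]
    have hS2 : ∑ r, pd r (M r k) x = (if k = i0 then g x else 0) := by
      rw [Finset.sum_congr rfl (fun r _ => hpdM r k r x), Finset.sum_add_distrib]
      have hB : ∑ r, (if r = i0 ∧ k = i1 then pd r (prim i1 g) x else 0) = 0 := by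
        by_cases hk : k = i1
        · simp only [hk, eq_self_iff_true, and_true]
          rw [sum_delta i0 (fun r => pd r (prim i1 g) x)]
          rw [pd_prim_other h01 hgsm x]
          rw [prim_congr i1 hpdg x, prim_zero]
        · simp [hk]
      rw [hB, add_zero]
      by_cases hk : k = i0
      · simp only [hk, eq_self_iff_true, if_true]
        exact sum_pd_prim i0 v hv hdiv x
      · simp [hk]
    rw [hS1, hS2]
    ring

lemma prim_sub (j : Fin D) {f g : (Fin D → ℝ) → ℝ} (hf : Continuous f) (hg : Continuous g)
    (x : Fin D → ℝ) :
    prim j (fun y => f y - g y) x = prim j f x - prim j g x := by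
  show (∫ t in (0:ℝ)..(x j), (f (Function.update x j t) - g (Function.update x j t))) = _
  rw [intervalIntegral.integral_sub (intervalIntegrable_comp j hf x 0 (x j))
    (intervalIntegrable_comp j hg x 0 (x j))]
  rfl

/-- Divergence of the `prim`-potential row, general version. -/
lemma sum_pd_prim' (i0 : Fin D) (w : Fin D → (Fin D → ℝ) → ℝ)
    (hw : ∀ k, ContDiff ℝ ∞ (w k)) (x : Fin D → ℝ) :
    ∑ r, pd r (prim i0 (w r)) x
      = prim i0 (fun y => ∑ r, pd r (w r) y) x + w i0 (updCLM i0 x) := by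
  rw [← Finset.add_sum_erase _ _ (Finset.mem_univ i0)]
  rw [pd_prim_self i0 (hw i0) x]
  have h1 : ∀ r ∈ Finset.univ.erase i0,
      pd r (prim i0 (w r)) x = prim i0 (pd r (w r)) x := fun r hr =>
    pd_prim_other (Finset.ne_of_mem_erase hr) (hw r) x
  rw [Finset.sum_congr rfl h1]
  have h2 : ∑ r ∈ Finset.univ.erase i0, prim i0 (pd r (w r)) x
      = prim i0 (fun y => ∑ r ∈ Finset.univ.erase i0, pd r (w r) y) x :=
    (prim_sum i0 _ _ (fun r => (sm_pd (hw r) r).continuous) x).symm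
  rw [h2]
  have h3 : ∀ y, (∑ r ∈ Finset.univ.erase i0, pd r (w r) y)
      = (∑ r, pd r (w r) y) - pd i0 (w i0) y := by
    intro y
    rw [← Finset.add_sum_erase _ (fun r => pd r (w r) y) (Finset.mem_univ i0)]
    ring
  rw [prim_congr i0 h3 x]
  rw [prim_sub i0 (by
      exact continuous_finset_sum _ fun r _ => (sm_pd (hw r) r).continuous)
    ((sm_pd (hw i0) i0).continuous) x]
  rw [prim_pd_self i0 (hw i0) x, updCLM_apply]
  ring

lemma main_potential (i0 i1 : Fin D) (h01 : i0 ≠ i1)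
    (R : Fin D → Fin D → (Fin D → ℝ) → ℝ)
    (hsm : ∀ p k, ContDiff ℝ ∞ (R p k))
    (hsym : ∀ p k x, R p k x = R k p x)
    (hdd : ∀ x, ∑ k, ∑ p, pd k (pd p (R p k)) x = 0) :
    ∃ S : Fin D → Fin D → Fin D → (Fin D → ℝ) → ℝ,
      (∀ p k r, ContDiff ℝ ∞ (S p k r)) ∧
      (∀ p k r x, S p k r x = - S p r k x) ∧
      (∀ p k x, R p k x
        = ∑ r, pd r (fun y => (1/2 : ℝ) * (S p k r y + S k p r y)) x) := by
  classical
  -- the divergence vector field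
  set J : Fin D → (Fin D → ℝ) → ℝ := fun p => fun x => ∑ k, pd k (R p k) x with hJ
  have hJsm : ∀ p, ContDiff ℝ ∞ (J p) := fun p =>
    ContDiff.sum fun k _ => sm_pd (hsm p k) k
  have hJdiv : ∀ x, ∑ p, pd p (J p) x = 0 := by
    intro x
    have h1 : ∀ p, pd p (J p) x = ∑ k, pd p (pd k (R p k)) x := fun p =>
      pd_sum Finset.univ (fun k => pd k (R p k)) (fun k => sm_pd (hsm p k) k) p x
    rw [Finset.sum_congr rfl fun p _ => h1 p]
    have h2 : ∀ p k, pd p (pd k (R p k)) x = pd k (pd p (R p k)) x := fun p k =>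
      pd_comm (hsm p k) p k x
    rw [Finset.sum_congr rfl fun p _ => Finset.sum_congr rfl fun k _ => h2 p k]
    rw [Finset.sum_comm]
    exact hdd x
  obtain ⟨A, hAsm, hAanti, hAdiv⟩ := divfree_potential i0 i1 h01 J hJsm hJdiv
  -- the potential of A
  set Q : Fin D → Fin D → (Fin D → ℝ) → ℝ := fun p r => prim i0 (A p r) with hQ
  have hQsm : ∀ p r, ContDiff ℝ ∞ (Q p r) := fun p r => sm_prim i0 (hAsm p r)
  have hQA : ∀ p r y, pd i0 (Q p r) y = A p r y := fun p r y =>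
    pd_prim_self i0 (hAsm p r) y
  set divQ : Fin D → (Fin D → ℝ) → ℝ := fun p => fun x => ∑ r, pd r (Q p r) x
    with hdivQ
  have hdivQsm : ∀ p, ContDiff ℝ ∞ (divQ p) := fun p =>
    ContDiff.sum fun r _ => sm_pd (hQsm p r) r
  have hdivQ_eq : ∀ p x, divQ p x = prim i0 (J p) x + A p i0 (updCLM i0 x) := by
    intro p x
    show ∑ r, pd r (prim i0 (A p r)) x = _
    rw [sum_pd_prim' i0 (fun r => A p r) (fun r => hAsm p r) x]
    rw [prim_congr i0 (fun y => hAdiv p y) x]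
  -- the correction tensor C
  set C : Fin D → Fin D → (Fin D → ℝ) → ℝ := fun p k =>
    (if k = i0 then divQ p else 0) + (if p = i0 then divQ k else 0) with hC
  have hCsm : ∀ p k, ContDiff ℝ ∞ (C p k) := by
    intro p k
    apply ContDiff.add <;> split_ifs <;>
      first
        | exact hdivQsm _
        | exact contDiff_const
  have hCapp : ∀ p k x, C p k x
      = (if k = i0 then divQ p x else 0) + (if p = i0 then divQ k x else 0) := by
    intro p k x
    show (if k = i0 then divQ p else 0) x + (if p = i0 then divQ k else 0) x = _
    congr 1 <;> split_ifs <;> rfl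
  have hCsym : ∀ p k x, C p k x = C k p x := by
    intro p k x
    rw [hCapp, hCapp]
    ring
  have hpdC : ∀ (p k s : Fin D) (x : Fin D → ℝ), pd s (C p k) x
      = (if k = i0 then pd s (divQ p) x else 0)
        + (if p = i0 then pd s (divQ k) x else 0) := by
    intro p k s x
    have hF : ContDiff ℝ ∞ (if k = i0 then divQ p else (0 : (Fin D → ℝ) → ℝ)) := by
      split_ifs
      · exact hdivQsm p
      · exact contDiff_const
    have hG : ContDiff ℝ ∞ (if p = i0 then divQ k else (0 : (Fin D → ℝ) → ℝ)) := by
      split_ifs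
      · exact hdivQsm k
      · exact contDiff_const
    have h2 : pd s (C p k) x
        = pd s (if k = i0 then divQ p else 0) x
          + pd s (if p = i0 then divQ k else 0) x := pd_add hF hG s x
    rw [h2]
    congr 1 <;> split_ifs with h <;> first | rfl | exact pd_zero s x
  -- ∂_i0 divQ p = J p
  have hg1 : ∀ p x, pd i0 (divQ p) x = J p x := by
    intro p x
    have h1 : pd i0 (divQ p) x = ∑ r, pd i0 (pd r (Q p r)) x :=
      pd_sum Finset.univ (fun r => pd r (Q p r)) (fun r => sm_pd (hQsm p r) r) i0 x
    rw [h1]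
    have h2 : ∀ r, pd i0 (pd r (Q p r)) x = pd r (A p r) x := by
      intro r
      rw [pd_comm (hQsm p r) i0 r x]
      exact pd_congr (fun y => hQA p r y) r x
    rw [Finset.sum_congr rfl fun r _ => h2 r]
    exact hAdiv p x
  -- ∑_k ∂_k divQ k = 0
  have hg2 : ∀ x, ∑ k, pd k (divQ k) x = 0 := by
    intro x
    have h1 : ∀ k, pd k (divQ k) x
        = pd k (prim i0 (J k)) x + pd k (fun y => A k i0 (updCLM i0 y)) x := by
      intro k
      rw [pd_congr (fun y => hdivQ_eq k y) k x]
      exact pd_add (sm_prim i0 (hJsm k)) (sm_comp_upd i0 (hAsm k i0)) k x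
    rw [Finset.sum_congr rfl fun k _ => h1 k, Finset.sum_add_distrib]
    have h2 : ∑ k, pd k (prim i0 (J k)) x = J i0 (updCLM i0 x) :=
      sum_pd_prim i0 J hJsm hJdiv x
    have h3 : ∑ k, pd k (fun y => A k i0 (updCLM i0 y)) x = - J i0 (updCLM i0 x) := by
      set u := updCLM i0 x with hu
      have hterm : ∀ k, pd k (fun y => A k i0 (updCLM i0 y)) x
          = if k = i0 then 0 else - pd k (A i0 k) u := by
        intro k
        rw [pd_comp_upd i0 k (hAsm k i0) x]
        split_ifs with h
        · rfl
        · rw [pd_congr (fun y => hAanti k i0 y) k u]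
          exact pd_neg k u
      rw [Finset.sum_congr rfl fun k _ => hterm k]
      have hsplit : ∀ k : Fin D, (if k = i0 then (0:ℝ) else - pd k (A i0 k) u)
          = - pd k (A i0 k) u - (if k = i0 then - pd k (A i0 k) u else 0) := by
        intro k
        split_ifs with h
        · ring
        · ring
      rw [Finset.sum_congr rfl fun k _ => hsplit k, Finset.sum_sub_distrib]
      rw [sum_delta i0 (fun k => - pd k (A i0 k) u)]
      rw [Finset.sum_neg_distrib]
      have hz : pd i0 (A i0 i0) u = 0 := by
        have hself : pd i0 (A i0 i0) u = - pd i0 (A i0 i0) u := by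
          nth_rewrite 1 [pd_congr (fun y => hAanti i0 i0 y) i0 u]
          exact pd_neg i0 u
        linarith
      rw [hz]
      rw [show ∑ k, pd k (A i0 k) u = J i0 u from hAdiv i0 u]
      ring
    rw [h2, h3]
    ring
  -- divergence of C is J
  have hdivC : ∀ p x, ∑ k, pd k (C p k) x = J p x := by
    intro p x
    rw [Finset.sum_congr rfl fun k _ => hpdC p k k x, Finset.sum_add_distrib]
    rw [sum_delta i0 (fun k => pd k (divQ p) x)]
    rw [hg1 p x]
    have : ∑ k, (if p = i0 then pd k (divQ k) x else 0) = 0 := by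
      by_cases hp : p = i0
      · simp only [hp, eq_self_iff_true, if_true]
        exact hg2 x
      · simp [hp]
    rw [this]
    ring
  -- the corrected tensor
  set R' : Fin D → Fin D → (Fin D → ℝ) → ℝ := fun p k => fun x => R p k x - C p k x
    with hR'
  have hR'sm : ∀ p k, ContDiff ℝ ∞ (R' p k) := fun p k => (hsm p k).sub (hCsm p k)
  have hR'div : ∀ p x, ∑ k, pd k (R' p k) x = 0 := by
    intro p x
    have h1 : ∀ k, pd k (R' p k) x = pd k (R p k) x - pd k (C p k) x := fun k =>
      pd_sub (hsm p k) (hCsm p k) k x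
    rw [Finset.sum_congr rfl fun k _ => h1 k, Finset.sum_sub_distrib]
    rw [show ∑ k, pd k (C p k) x = J p x from hdivC p x]
    show J p x - J p x = 0
    ring
  have hR'sym : ∀ p k x, R' p k x = R' k p x := by
    intro p k x
    show R p k x - C p k x = R k p x - C k p x
    rw [hsym p k x, hCsym p k x]
  -- row potentials
  choose B hBsm hBanti hBdiv using fun p =>
    divfree_potential i0 i1 h01 (fun k => R' p k) (fun k => hR'sm p k) (hR'div p)
  -- the S_C part
  set SC : Fin D → Fin D → Fin D → (Fin D → ℝ) → ℝ := fun p k r => fun x =>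
    2 * ((if k = i0 then Q p r else 0) x - (if r = i0 then Q p k else 0) x) with hSC
  have hifQ : ∀ (c : Prop) [Decidable c] (p r : Fin D),
      ContDiff ℝ ∞ (if c then Q p r else (0 : (Fin D → ℝ) → ℝ)) := by
    intro c _ p r
    split_ifs
    · exact hQsm p r
    · exact contDiff_const
  have hSCsm : ∀ p k r, ContDiff ℝ ∞ (SC p k r) := by
    intro p k r
    exact contDiff_const.mul ((hifQ _ p r).sub (hifQ _ p k))
  have hSCanti : ∀ p k r x, SC p k r x = - SC p r k x := by
    intro p k r x
    show 2 * ((if k = i0 then Q p r else 0) x - (if r = i0 then Q p k else 0) x)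
      = -(2 * ((if r = i0 then Q p k else 0) x - (if k = i0 then Q p r else 0) x))
    ring
  -- sum of pd of SC
  have hSCsum : ∀ p k x, ∑ r, pd r (SC p k r) x
      = 2 * (if k = i0 then divQ p x else 0) - 2 * A p k x := by
    intro p k x
    have hterm : ∀ r, pd r (SC p k r) x
        = 2 * ((if k = i0 then pd r (Q p r) x else 0)
            - (if r = i0 then pd r (Q p k) x else 0)) := by
      intro r
      have h1 : pd r (SC p k r) x
          = 2 * pd r (fun y => (if k = i0 then Q p r else 0) y
              - (if r = i0 then Q p k else 0) y) x :=
        pd_const_mul ((hifQ _ p r).sub (hifQ _ p k)) 2 r x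
      rw [h1, pd_sub (hifQ _ p r) (hifQ _ p k) r x]
      congr 2 <;> split_ifs with h <;> first | rfl | exact pd_zero r x
    rw [Finset.sum_congr rfl fun r _ => hterm r]
    have hc : ∀ r : Fin D, (2:ℝ) * ((if k = i0 then pd r (Q p r) x else 0)
          - (if r = i0 then pd r (Q p k) x else 0))
        = 2 * (if k = i0 then pd r (Q p r) x else 0)
          - 2 * (if r = i0 then pd r (Q p k) x else 0) := fun r => by ring
    rw [Finset.sum_congr rfl fun r _ => hc r, Finset.sum_sub_distrib]
    rw [← Finset.mul_sum, ← Finset.mul_sum]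
    rw [sum_delta i0 (fun r => pd r (Q p k) x)]
    rw [show pd i0 (Q p k) x = A p k x from hQA p k x]
    have hs : ∑ r, (if k = i0 then pd r (Q p r) x else 0)
        = (if k = i0 then divQ p x else 0) := by
      by_cases hk : k = i0
      · simp only [hk, eq_self_iff_true, if_true]
        try rfl
      · simp [hk]
    rw [hs]
  -- final assembly
  refine ⟨fun p k r => fun x => SC p k r x + B p k r x, ?_, ?_, ?_⟩
  · intro p k r
    exact (hSCsm p k r).add (hBsm p k r)
  · intro p k r x
    show SC p k r x + B p k r x = -(SC p r k x + B p r k x)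
    rw [hSCanti p k r x, hBanti p k r x]
    ring
  · intro p k x
    show R p k x = ∑ r, pd r (fun y =>
      (1/2 : ℝ) * ((SC p k r y + B p k r y) + (SC k p r y + B k p r y))) x
    have hterm : ∀ r, pd r (fun y =>
        (1/2 : ℝ) * ((SC p k r y + B p k r y) + (SC k p r y + B k p r y))) x
        = (1/2 : ℝ) * ((pd r (SC p k r) x + pd r (B p k r) x)
            + (pd r (SC k p r) x + pd r (B k p r) x)) := by
      intro r
      have hin1 : ContDiff ℝ ∞ (fun y => SC p k r y + B p k r y) :=
        (hSCsm p k r).add (hBsm p k r)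
      have hin2 : ContDiff ℝ ∞ (fun y => SC k p r y + B k p r y) :=
        (hSCsm k p r).add (hBsm k p r)
      have h1 : pd r (fun y =>
          (1/2 : ℝ) * ((SC p k r y + B p k r y) + (SC k p r y + B k p r y))) x
          = (1/2 : ℝ) * pd r (fun y =>
            (SC p k r y + B p k r y) + (SC k p r y + B k p r y)) x :=
        pd_const_mul (hin1.add hin2) (1/2) r x
      have h2 : pd r (fun y => (SC p k r y + B p k r y) + (SC k p r y + B k p r y)) x
          = pd r (fun y => SC p k r y + B p k r y) x
            + pd r (fun y => SC k p r y + B k p r y) x := pd_add hin1 hin2 r x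
      have h3 : pd r (fun y => SC p k r y + B p k r y) x
          = pd r (SC p k r) x + pd r (B p k r) x := pd_add (hSCsm p k r) (hBsm p k r) r x
      have h4 : pd r (fun y => SC k p r y + B k p r y) x
          = pd r (SC k p r) x + pd r (B k p r) x := pd_add (hSCsm k p r) (hBsm k p r) r x
      rw [h1, h2, h3, h4]
    rw [Finset.sum_congr rfl fun r _ => hterm r]
    rw [← Finset.mul_sum]
    rw [Finset.sum_add_distrib, Finset.sum_add_distrib, Finset.sum_add_distrib]
    rw [hSCsum p k x, hSCsum k p x, hBdiv p k x, hBdiv k p x]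
    have h5 : R' k p x = R' p k x := hR'sym k p x
    have h6 : R' p k x = R p k x - C p k x := rfl
    have h7 : A k p x = - A p k x := hAanti k p x
    have h8 := hCapp p k x
    rw [h5, h6, h7]
    linarith [h8]

lemma pd3_congr {f g : (Fin D → ℝ) → ℝ} (h : ∀ y, f y = g y) (a b c : Fin D)
    (x : Fin D → ℝ) :
    pd a (pd b (pd c f)) x = pd a (pd b (pd c g)) x := by
  rw [show f = g from funext h]

lemma pd3_neg (f : (Fin D → ℝ) → ℝ) (a b c : Fin D) (x : Fin D → ℝ) :
    pd a (pd b (pd c (fun y => -f y))) x = - pd a (pd b (pd c f)) x := by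
  have h1 : ∀ y, pd c (fun z => -f z) y = - pd c f y := fun y => pd_neg c y
  have h2 : ∀ y, pd b (pd c (fun z => -f z)) y = - pd b (pd c f) y := by
    intro y
    rw [pd_congr h1 b y]
    exact pd_neg b y
  rw [pd_congr h2 a x]
  exact pd_neg a x

lemma pd3_swap12 {f : (Fin D → ℝ) → ℝ} (hf : ContDiff ℝ ∞ f) (a b c : Fin D)
    (x : Fin D → ℝ) :
    pd a (pd b (pd c f)) x = pd b (pd a (pd c f)) x := pd_comm (sm_pd hf c) a b x

lemma pd3_swap23 {f : (Fin D → ℝ) → ℝ} (hf : ContDiff ℝ ∞ f) (a b c : Fin D)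
    (x : Fin D → ℝ) :
    pd a (pd b (pd c f)) x = pd a (pd c (pd b f)) x :=
  pd_congr (fun y => pd_comm hf b c y) a x

lemma pd3_swap13 {f : (Fin D → ℝ) → ℝ} (hf : ContDiff ℝ ∞ f) (a b c : Fin D)
    (x : Fin D → ℝ) :
    pd a (pd b (pd c f)) x = pd c (pd b (pd a f)) x := by
  rw [pd3_swap23 hf a b c x, pd3_swap12 hf a c b x, pd3_swap23 hf c a b x]

lemma backward (R : Fin D → Fin D → (Fin D → ℝ) → ℝ)
    (S : Fin D → Fin D → Fin D → (Fin D → ℝ) → ℝ)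
    (hS : ∀ p k r, ContDiff ℝ ∞ (S p k r))
    (hanti : ∀ p k r x, S p k r x = - S p r k x)
    (hrep : ∀ p k x, R p k x
      = ∑ r, pd r (fun y => (1/2 : ℝ) * (S p k r y + S k p r y)) x)
    (x : Fin D → ℝ) :
    ∑ k, ∑ p, pd k (pd p (R p k)) x = 0 := by
  classical
  have hGsm : ∀ p k r, ContDiff ℝ ∞ (fun y => (1/2 : ℝ) * (S p k r y + S k p r y)) :=
    fun p k r => contDiff_const.mul ((hS p k r).add (hS k p r))
  have hstep : ∀ p k, ∀ y, pd p (R p k) y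
      = ∑ r, pd p (pd r (fun z => (1/2 : ℝ) * (S p k r z + S k p r z))) y := by
    intro p k y
    rw [pd_congr (fun z => hrep p k z) p y]
    exact pd_sum Finset.univ _ (fun r => sm_pd (hGsm p k r) r) p y
  have hstep2 : ∀ p k, pd k (pd p (R p k)) x
      = ∑ r, pd k (pd p (pd r (fun z => (1/2 : ℝ) * (S p k r z + S k p r z)))) x := by
    intro p k
    rw [pd_congr (hstep p k) k x]
    exact pd_sum Finset.univ _ (fun r => sm_pd (sm_pd (hGsm p k r) r) p) k x
  rw [Finset.sum_congr rfl fun k _ => Finset.sum_congr rfl fun p _ => hstep2 p k]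
  have hsplit : ∀ p k r, pd k (pd p (pd r
        (fun z => (1/2 : ℝ) * (S p k r z + S k p r z)))) x
      = (1/2 : ℝ) * (pd k (pd p (pd r (S p k r))) x
          + pd k (pd p (pd r (S k p r))) x) := by
    intro p k r
    have e1 : ∀ y, pd r (fun z => (1/2 : ℝ) * (S p k r z + S k p r z)) y
        = (1/2 : ℝ) * (pd r (S p k r) y + pd r (S k p r) y) := by
      intro y
      have a1 : pd r (fun z => (1/2 : ℝ) * (S p k r z + S k p r z)) y
          = (1/2 : ℝ) * pd r (fun z => S p k r z + S k p r z) y :=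
        pd_const_mul ((hS p k r).add (hS k p r)) (1/2) r y
      rw [a1, pd_add (hS p k r) (hS k p r) r y]
    have e2 : ∀ y, pd p (pd r (fun z => (1/2 : ℝ) * (S p k r z + S k p r z))) y
        = (1/2 : ℝ) * (pd p (pd r (S p k r)) y + pd p (pd r (S k p r)) y) := by
      intro y
      rw [pd_congr e1 p y]
      have a1 : pd p (fun z => (1/2 : ℝ) * (pd r (S p k r) z + pd r (S k p r) z)) y
          = (1/2 : ℝ) * pd p (fun z => pd r (S p k r) z + pd r (S k p r) z) y :=
        pd_const_mul ((sm_pd (hS p k r) r).add (sm_pd (hS k p r) r)) (1/2) p y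
      rw [a1, pd_add (sm_pd (hS p k r) r) (sm_pd (hS k p r) r) p y]
    rw [pd_congr e2 k x]
    have a1 : pd k (fun z => (1/2 : ℝ) * (pd p (pd r (S p k r)) z
        + pd p (pd r (S k p r)) z)) x
        = (1/2 : ℝ) * pd k (fun z => pd p (pd r (S p k r)) z
            + pd p (pd r (S k p r)) z) x :=
      pd_const_mul ((sm_pd (sm_pd (hS p k r) r) p).add (sm_pd (sm_pd (hS k p r) r) p))
        (1/2) k x
    rw [a1, pd_add (sm_pd (sm_pd (hS p k r) r) p) (sm_pd (sm_pd (hS k p r) r) p) k x]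
  rw [Finset.sum_congr rfl fun k _ => Finset.sum_congr rfl fun p _ =>
    Finset.sum_congr rfl fun r _ => hsplit p k r]
  have collapse : ∀ (F G : Fin D → Fin D → Fin D → ℝ),
      ∑ k, ∑ p, ∑ r, (1/2 : ℝ) * (F k p r + G k p r)
        = (1/2 : ℝ) * ((∑ k, ∑ p, ∑ r, F k p r) + ∑ k, ∑ p, ∑ r, G k p r) := by
    intro F G
    simp only [mul_add, Finset.mul_sum, Finset.sum_add_distrib]
  rw [collapse (fun k p r => pd k (pd p (pd r (S p k r))) x)
    (fun k p r => pd k (pd p (pd r (S k p r))) x)]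
  -- the second triple sum equals the first
  have hY : (∑ k, ∑ p, ∑ r, pd k (pd p (pd r (S k p r))) x)
      = ∑ k, ∑ p, ∑ r, pd k (pd p (pd r (S p k r))) x := by
    rw [Finset.sum_comm]
    exact Finset.sum_congr rfl fun p _ => Finset.sum_congr rfl fun k _ =>
      Finset.sum_congr rfl fun r _ => pd3_swap12 (hS k p r) k p r x
  rw [hY]
  -- the first triple sum vanishes by antisymmetry
  have hperm : (∑ k, ∑ p, ∑ r, pd k (pd p (pd r (S p k r))) x)
      = ∑ r, ∑ p, ∑ k, pd k (pd p (pd r (S p k r))) x := by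
    calc (∑ k, ∑ p, ∑ r, pd k (pd p (pd r (S p k r))) x)
        = ∑ k, ∑ r, ∑ p, pd k (pd p (pd r (S p k r))) x :=
          Finset.sum_congr rfl fun k _ => Finset.sum_comm
      _ = ∑ r, ∑ k, ∑ p, pd k (pd p (pd r (S p k r))) x := Finset.sum_comm
      _ = ∑ r, ∑ p, ∑ k, pd k (pd p (pd r (S p k r))) x :=
          Finset.sum_congr rfl fun r _ => Finset.sum_comm
  have hXneg : (∑ k, ∑ p, ∑ r, pd k (pd p (pd r (S p k r))) x)
      = - ∑ k, ∑ p, ∑ r, pd k (pd p (pd r (S p k r))) x := by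
    nth_rewrite 1 [hperm]
    have hterm : ∀ k p r : Fin D, pd r (pd p (pd k (S p r k))) x
        = - pd k (pd p (pd r (S p k r))) x := by
      intro k p r
      have h1 : pd r (pd p (pd k (S p r k))) x
          = pd r (pd p (pd k (fun y => - S p k r y))) x :=
        pd3_congr (fun y => hanti p r k y) r p k x
      rw [h1, pd3_neg (S p k r) r p k x, pd3_swap13 (hS p k r) r p k x]
    calc (∑ r, ∑ p, ∑ k, pd k (pd p (pd r (S p k r))) x)
        = ∑ k, ∑ p, ∑ r, pd r (pd p (pd k (S p r k))) x := rfl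
      _ = ∑ k, ∑ p, ∑ r, - pd k (pd p (pd r (S p k r))) x :=
          Finset.sum_congr rfl fun k _ => Finset.sum_congr rfl fun p _ =>
            Finset.sum_congr rfl fun r _ => hterm k p r
      _ = - ∑ k, ∑ p, ∑ r, pd k (pd p (pd r (S p k r))) x := by
          simp only [Finset.sum_neg_distrib]
  have hX0 : (∑ k, ∑ p, ∑ r, pd k (pd p (pd r (S p k r))) x) = 0 := by
    linarith
  rw [hX0]
  ring
end Stmt12

/-- Proposition 4, case D ≥ 3: a smooth symmetric tensor field R^{pk}
satisfies ∂_k∂_p R^{pk} = 0 iff R^{pk} = ∂_r S^{(pk)r} for some smooth S^{pkr} with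
S^{pkr} = −S^{prk}. -/
theorem stmt_12 (D : ℕ) (hD : 3 ≤ D)
    (R : Fin D → Fin D → (Fin D → ℝ) → ℝ)
    (hsmooth : ∀ p k, ContDiff ℝ (⊤ : ℕ∞) (R p k))
    (hsym : ∀ p k x, R p k x = R k p x) :
    (∀ x, ∑ k, ∑ p, pd k (pd p (R p k)) x = 0)
    ↔ ∃ S : Fin D → Fin D → Fin D → (Fin D → ℝ) → ℝ,
        (∀ p k r, ContDiff ℝ (⊤ : ℕ∞) (S p k r)) ∧
        (∀ p k r x, S p k r x = - S p r k x) ∧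
        (∀ p k x, R p k x
          = ∑ r, pd r (fun y => (1/2 : ℝ) * (S p k r y + S k p r y)) x) := by
  have h01 : (⟨0, by omega⟩ : Fin D) ≠ (⟨1, by omega⟩ : Fin D) := by
    intro h
    simpa using congrArg Fin.val h
  constructor
  · intro h
    exact Stmt12.main_potential ⟨0, by omega⟩ ⟨1, by omega⟩ h01 R hsmooth hsym h
  · rintro ⟨S, hS, hanti, hrep⟩ x
    exact Stmt12.backward R S hS hanti hrep x
end
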